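/- arXiv:1810.10843 — 6 statements merged into one kernel-verified Lean document; each statement's English description precedes it below -/
import Mathlib

section
/- Comparison of two Loewner traces on a fixed time interval (Lemma 3.1): Let λ : [0,1] → ℝ be in the class D, and let δ : (0,∞) → (0,∞) be such that for all ε > 0, all t ∈ [0,1] and all z₁, z₂ ∈ ℍ, |z₁ − z₂| ≤ δ(ε) implies |f^λ_t(z₁) − f^λ_t(z₂)| ≤ ε. Let osc(r) := sup{|λ(u) − λ(v)| : u, v ∈ [0,1], |u − v| ≤ r}. Let Δt > 0 and 0 ≤ t₀ < t₁ < t₂ ≤ 1 with t₁ − t₀ ≤ Δt and t₂ − t₁ ≤ Δt. Let ξ : [0,1] → ℝ be continuous with ξ(0) = 0, and let γ^ξ, γ^λ : [t₁,t₂] → ℂ and γ^ξ_{t₀}, γ^λ_{t₀} : [t₀,t₂] → ℂ be functions satisfying: (i) for all s ∈ [t₀,t₂], |Re γ^ξ_{t₀}(s)| ≤ sup_{u∈[t₀,s]} |ξ(u) − ξ(t₀)|, 0 ≤ Im γ^ξ_{t₀}(s) ≤ 2√(s − t₀), |Re γ^λ_{t₀}(s)| ≤ sup_{u∈[t₀,s]}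 |λ(u) − λ(t₀)| and 0 ≤ Im γ^λ_{t₀}(s) ≤ 2√(s − t₀) (these express that the trace points lie in the corresponding Loewner hulls); (ii) Im γ^λ_{t₀}(t) > 0 for all t ∈ (t₀,t₂]; (iii) c := inf_{t∈[t₁,t₂]} Im γ^ξ_{t₀}(t) > 0; (iv) for all t ∈ [t₁,t₂], γ^ξ(t) = f^ξ_{t₀}(γ^ξ_{t₀}(t) + ξ(t₀)) and γ^λ(t) = f^λ_{t₀}(γ^λ_{t₀}(t) + λ(t₀)) (the concatenation property of Loewner traces). Suppose moreover that ε₀, ε₁, ε̄, a > 0 satisfy sup_{s∈[0,t₀]} |ξ(s) − λ(s)| ≤ ε₀, sup_{s∈[t₀,t₂]} |(ξ(s) − ξ(t₀)) − (λ(s) − λ(t₀))| ≤ ε₁, ε₀ ≤ ε̄, ε₁ ≤ ε̄, and 2·osc(2Δt) + 2√(2Δt) + 5ε̄ ≤ δ(a). Then for all t ∈ [t₁,t₂]: |γ^ξ(t) − γ^λ(t)| ≤ a + ε₀·(√(4t₀ + c²)/c − 1). -/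
/-- A continuous function `λ : [0,1] → ℝ` belongs to the class `D` if `λ 0 = 0` and `λ` has
locally vanishing `1/2`-Hölder norm. -/
def ClassD (lam : ℝ → ℝ) : Prop :=
  ContinuousOn lam (Set.Icc 0 1) ∧ lam 0 = 0 ∧
    ∀ ε > (0 : ℝ), ∃ δ > (0 : ℝ), ∀ s t : ℝ, 0 ≤ s → s ≤ t → t ≤ 1 → t - s < δ →
      |lam t - lam s| ≤ ε * Real.sqrt (t - s)

/-- `f` is the family of inverse Loewner maps `f^U_t` of the driver `U`: `f^U_0 z = z`, and for
`t ∈ (0,1]` and `z ∈ ℍ`, `f^U_t z = h t` where `h` solves the reverse Loewner equation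
`h 0 = z`, `h'(s) = -2/(h s - U (t - s))` on `[0,t]`. -/
def IsInvLoewnerMap (U : ℝ → ℝ) (f : ℝ → ℂ → ℂ) : Prop :=
  (∀ z : ℂ, f 0 z = z) ∧
  ∀ t ∈ Set.Ioc (0 : ℝ) 1, ∀ z : ℂ, 0 < z.im →
    ∃ h : ℝ → ℂ, h 0 = z ∧
      (∀ s ∈ Set.Icc (0 : ℝ) t, h s - (U (t - s) : ℂ) ≠ 0 ∧
        HasDerivWithinAt h (-2 / (h s - (U (t - s) : ℂ))) (Set.Icc 0 t) s) ∧
      f t z = h t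

/-- The modulus of continuity `osc(r) = sup {|λ u - λ v| : u, v ∈ [0,1], |u - v| ≤ r}`. -/
noncomputable def oscOn (lam : ℝ → ℝ) (r : ℝ) : ℝ :=
  sSup {y : ℝ | ∃ u ∈ Set.Icc (0 : ℝ) 1, ∃ v ∈ Set.Icc (0 : ℝ) 1, |u - v| ≤ r ∧ y = |lam u - lam v|}

open Set

lemma hasDerivWithinAt_im {h : ℝ → ℂ} {d : ℂ} {s : Set ℝ} {x : ℝ}
    (H : HasDerivWithinAt h d s x) :
    HasDerivWithinAt (fun t => (h t).im) d.im s x := by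
  exact (Complex.imCLM.hasFDerivAt.comp_hasDerivWithinAt x H)

lemma neg_two_div_im (A : ℂ) (hA : A ≠ 0) : ((-2 : ℂ) / A).im = 2 * A.im / Complex.normSq A := by
  rw [Complex.div_im]
  simp [Complex.normSq_apply]
  ring

lemma flow_im_bounds (U : ℝ → ℝ) (t₀ : ℝ) (ht₀ : 0 < t₀) (w : ℂ) (hw : 0 < w.im)
    (h : ℝ → ℂ) (h0 : h 0 = w)
    (H : ∀ s ∈ Set.Icc (0:ℝ) t₀, h s - (U (t₀ - s) : ℂ) ≠ 0 ∧
      HasDerivWithinAt h (-2 / (h s - (U (t₀ - s) : ℂ))) (Set.Icc 0 t₀) s) :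
    ∀ s ∈ Set.Icc (0:ℝ) t₀, w.im ≤ (h s).im ∧ (h s).im ^ 2 ≤ w.im ^ 2 + 4 * s := by
  set A : ℝ → ℂ := fun s => h s - (U (t₀ - s) : ℂ) with hA
  have hAim : ∀ s, (A s).im = (h s).im := by intro s; simp [hA]
  have hnsq : ∀ s ∈ Set.Icc (0:ℝ) t₀, 0 < Complex.normSq (A s) := fun s hs =>
    Complex.normSq_pos.2 (H s hs).1
  -- derivative of the imaginary part
  have him : ∀ s ∈ Set.Icc (0:ℝ) t₀,
      HasDerivWithinAt (fun t => (h t).im) (2 * (h s).im / Complex.normSq (A s))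
        (Set.Icc 0 t₀) s := by
    intro s hs
    have := hasDerivWithinAt_im (H s hs).2
    rwa [neg_two_div_im _ (H s hs).1, hAim] at this
  -- derivative of the square of the imaginary part
  have hsq : ∀ s ∈ Set.Icc (0:ℝ) t₀,
      HasDerivWithinAt (fun t => (h t).im ^ 2)
        (4 * (h s).im ^ 2 / Complex.normSq (A s)) (Set.Icc 0 t₀) s := by
    intro s hs
    have := ((him s hs).pow 2)
    refine this.congr_deriv ?_
    have := (hnsq s hs).ne'
    rw [show (2:ℕ) - 1 = 1 from rfl]
    push_cast
    ring
  have hcont : ContinuousOn (fun t => (h t).im) (Set.Icc 0 t₀) := fun s hs =>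
    (him s hs).continuousWithinAt
  have hcontsq : ContinuousOn (fun t => (h t).im ^ 2) (Set.Icc 0 t₀) := hcont.pow 2
  -- interior points give genuine derivatives
  have hint : ∀ x ∈ interior (Set.Icc (0:ℝ) t₀),
      HasDerivAt (fun t => (h t).im ^ 2) (4 * (h x).im ^ 2 / Complex.normSq (A x)) x := by
    intro x hx
    rw [interior_Icc] at hx
    exact (hsq x (Ioo_subset_Icc_self hx)).hasDerivAt (Icc_mem_nhds hx.1 hx.2)
  -- monotonicity of the square
  have hmono : MonotoneOn (fun t => (h t).im ^ 2) (Set.Icc 0 t₀) := by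
    apply monotoneOn_of_deriv_nonneg (convex_Icc _ _) hcontsq
    · intro x hx; exact (hint x hx).differentiableAt.differentiableWithinAt
    · intro x hx
      rw [(hint x hx).deriv]
      have := hnsq x (by rw [interior_Icc] at hx; exact Ioo_subset_Icc_self hx)
      positivity
  -- the square is bounded below by w.im ^ 2
  have hlow : ∀ s ∈ Set.Icc (0:ℝ) t₀, w.im ^ 2 ≤ (h s).im ^ 2 := by
    intro s hs
    have := hmono (left_mem_Icc.2 ht₀.le) hs hs.1
    simpa [h0] using this
  -- positivity of the imaginary part
  have hpos : ∀ s ∈ Set.Icc (0:ℝ) t₀, 0 < (h s).im := by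
    intro s hs
    by_contra hle
    push_neg at hle
    have hsub : Set.Icc (0:ℝ) s ⊆ Set.Icc 0 t₀ := Icc_subset_Icc le_rfl hs.2
    have : (0:ℝ) ∈ Set.Icc ((h s).im) ((h 0).im) := by
      constructor <;> simp [h0, hle, hw.le]
    obtain ⟨u, hu, hu0⟩ := intermediate_value_Icc' hs.1 (hcont.mono hsub) this
    have hu0' : (h u).im = 0 := hu0
    have := hlow u (hsub hu)
    rw [hu0'] at this
    nlinarith
  intro s hs
  refine ⟨?_, ?_⟩
  · have h1 := hlow s hs
    have h2 := hpos s hs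
    nlinarith
  · -- upper bound: (h s).im ^ 2 - 4 s is antitone
    have hub : ∀ x ∈ interior (Set.Icc (0:ℝ) t₀),
        HasDerivAt (fun t => (h t).im ^ 2 - 4 * t)
          (4 * (h x).im ^ 2 / Complex.normSq (A x) - 4) x := by
      intro x hx
      rw [interior_Icc] at hx
      have h4 : HasDerivAt (fun t : ℝ => 4 * t) 4 x := by
        simpa using (hasDerivAt_id x).const_mul (4:ℝ)
      exact ((hsq x (Ioo_subset_Icc_self hx)).hasDerivAt
        (Icc_mem_nhds hx.1 hx.2)).sub h4
    have hanti : AntitoneOn (fun t => (h t).im ^ 2 - 4 * t) (Set.Icc 0 t₀) := by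
      apply antitoneOn_of_deriv_nonpos (convex_Icc _ _)
        (hcontsq.sub (by fun_prop))
      · intro x hx; exact (hub x hx).differentiableAt.differentiableWithinAt
      · intro x hx
        show deriv (fun t => (h t).im ^ 2 - 4 * t) x ≤ 0
        rw [(hub x hx).deriv]
        have hx' := (by rw [interior_Icc] at hx; exact Ioo_subset_Icc_self hx : x ∈ Set.Icc (0:ℝ) t₀)
        have h1 : (h x).im ^ 2 ≤ Complex.normSq (A x) := by
          have : (A x).im = (h x).im := hAim x
          rw [Complex.normSq_apply, ← this]
          nlinarith [sq_nonneg (A x).re]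
        have h2 := hnsq x hx'
        rw [sub_nonpos, div_le_iff₀ h2]
        nlinarith
    have := hanti (left_mem_Icc.2 ht₀.le) hs hs.1
    simp only [h0, mul_zero, sub_zero] at this
    linarith

set_option maxHeartbeats 2000000 in
lemma loewner_compare (xi lam : ℝ → ℝ) (t₀ : ℝ) (ht₀ : 0 < t₀) (ε₀ : ℝ) (hε₀ : 0 < ε₀)
    (hsup : ∀ s ∈ Set.Icc (0:ℝ) t₀, |xi s - lam s| ≤ ε₀)
    (w : ℂ) (hw : 0 < w.im)
    (h1 h2 : ℝ → ℂ) (h10 : h1 0 = w) (h20 : h2 0 = w)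
    (H1 : ∀ s ∈ Set.Icc (0:ℝ) t₀, h1 s - (xi (t₀ - s) : ℂ) ≠ 0 ∧
      HasDerivWithinAt h1 (-2 / (h1 s - (xi (t₀ - s) : ℂ))) (Set.Icc 0 t₀) s)
    (H2 : ∀ s ∈ Set.Icc (0:ℝ) t₀, h2 s - (lam (t₀ - s) : ℂ) ≠ 0 ∧
      HasDerivWithinAt h2 (-2 / (h2 s - (lam (t₀ - s) : ℂ))) (Set.Icc 0 t₀) s) :
    ‖h1 t₀ - h2 t₀‖ ≤ ε₀ * (Real.sqrt (4 * t₀ + w.im ^ 2) / w.im - 1) := by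
  set y := w.im with hy
  set χ1 : ℝ → ℝ := fun s => (h1 s).im with hχ1
  set χ2 : ℝ → ℝ := fun s => (h2 s).im with hχ2
  have bounds1 := flow_im_bounds xi t₀ ht₀ w hw h1 h10 H1
  have bounds2 := flow_im_bounds lam t₀ ht₀ w hw h2 h20 H2
  have hmem : ∀ x ∈ Set.Ico (0:ℝ) t₀, x ∈ Set.Icc (0:ℝ) t₀ := fun x hx => Ico_subset_Icc_self hx
  -- imaginary part derivatives, within Ici x
  have him1 : ∀ x ∈ Set.Ico (0:ℝ) t₀,
      HasDerivWithinAt χ1 (2 * χ1 x / Complex.normSq (h1 x - (xi (t₀ - x) : ℂ)))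
        (Set.Ici x) x := by
    intro x hx
    have := hasDerivWithinAt_im (H1 x (hmem x hx)).2
    rw [neg_two_div_im _ (H1 x (hmem x hx)).1] at this
    have h2' := this.mono_of_mem_nhdsWithin (Icc_mem_nhdsGE_of_mem hx)
    simpa [hχ1] using h2'
  have him2 : ∀ x ∈ Set.Ico (0:ℝ) t₀,
      HasDerivWithinAt χ2 (2 * χ2 x / Complex.normSq (h2 x - (lam (t₀ - x) : ℂ)))
        (Set.Ici x) x := by
    intro x hx
    have := hasDerivWithinAt_im (H2 x (hmem x hx)).2
    rw [neg_two_div_im _ (H2 x (hmem x hx)).1] at this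
    have h2' := this.mono_of_mem_nhdsWithin (Icc_mem_nhdsGE_of_mem hx)
    simpa [hχ2] using h2'
  have hcont1 : ContinuousOn χ1 (Set.Icc 0 t₀) := fun s hs =>
    (Complex.continuous_im.continuousAt.comp_continuousWithinAt (H1 s hs).2.continuousWithinAt)
  have hcont2 : ContinuousOn χ2 (Set.Icc 0 t₀) := fun s hs =>
    (Complex.continuous_im.continuousAt.comp_continuousWithinAt (H2 s hs).2.continuousWithinAt)
  have hχ1y : ∀ s ∈ Set.Icc (0:ℝ) t₀, y ≤ χ1 s := fun s hs => (bounds1 s hs).1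
  have hχ2y : ∀ s ∈ Set.Icc (0:ℝ) t₀, y ≤ χ2 s := fun s hs => (bounds2 s hs).1
  set K : ℝ := 2 / y ^ 2 + 1 with hK
  have hKpos : 0 < K := by positivity
  -- the difference function
  set f : ℝ → ℂ := fun s => h1 s - h2 s with hf
  have hfc : ContinuousOn f (Set.Icc 0 t₀) := fun s hs =>
    ((H1 s hs).2.continuousWithinAt.sub (H2 s hs).2.continuousWithinAt)
  -- main fencing estimate, for each η > 0
  have main : ∀ η : ℝ, 0 < η → ‖f t₀‖ ≤
      ε₀ / y * Real.sqrt (χ1 t₀ * χ2 t₀) - ε₀ + η * Real.exp (K * t₀) := by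
    intro η hη
    set B : ℝ → ℝ := fun s => ε₀ / y * Real.sqrt (χ1 s * χ2 s) - ε₀ + η * Real.exp (K * s)
      with hB
    set B' : ℝ → ℝ := fun x =>
      ε₀ / y * ((2 * χ1 x / Complex.normSq (h1 x - (xi (t₀ - x) : ℂ)) * χ2 x
        + χ1 x * (2 * χ2 x / Complex.normSq (h2 x - (lam (t₀ - x) : ℂ))))
          / (2 * Real.sqrt (χ1 x * χ2 x)))
      + η * (K * Real.exp (K * x)) with hB'
    have key := image_norm_le_of_norm_deriv_right_lt_deriv_boundary'
      (f := f) (f' := fun x => -2 / (h1 x - (xi (t₀ - x) : ℂ)) + 2 / (h2 x - (lam (t₀ - x) : ℂ)))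
      (a := 0) (b := t₀) (B := B) (B' := B') hfc
      ?hf' ?ha ?hBc ?hB' ?bound (right_mem_Icc.2 ht₀.le)
    · simpa [hB] using key
    case hf' =>
      intro x hx
      have d1 := (H1 x (hmem x hx)).2.mono_of_mem_nhdsWithin (Icc_mem_nhdsGE_of_mem hx)
      have d2 := (H2 x (hmem x hx)).2.mono_of_mem_nhdsWithin (Icc_mem_nhdsGE_of_mem hx)
      have := d1.sub d2
      refine this.congr_deriv ?_
      ring
    case ha =>
      have : f 0 = 0 := by simp [hf, h10, h20]
      rw [this]
      simp only [hB, norm_zero]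
      have : Real.sqrt (χ1 0 * χ2 0) = y := by
        have : χ1 0 = y := by simp [hχ1, h10, hy]
        have h2' : χ2 0 = y := by simp [hχ2, h20, hy]
        rw [this, h2', Real.sqrt_mul_self hw.le]
      rw [this]
      have : ε₀ / y * y - ε₀ = 0 := by field_simp; ring
      rw [this]
      positivity
    case hBc =>
      apply ContinuousOn.add
      · exact (continuousOn_const.mul
          ((hcont1.mul hcont2).sqrt)).sub continuousOn_const
      · exact (continuous_const.mul (Real.continuous_exp.comp (continuous_const.mul continuous_id))).continuousOn
    case hB' =>
      intro x hx
      have hP : HasDerivWithinAt (fun s => χ1 s * χ2 s)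
          (2 * χ1 x / Complex.normSq (h1 x - (xi (t₀ - x) : ℂ)) * χ2 x
            + χ1 x * (2 * χ2 x / Complex.normSq (h2 x - (lam (t₀ - x) : ℂ)))) (Set.Ici x) x :=
        (him1 x hx).mul (him2 x hx)
      have hPpos : 0 < χ1 x * χ2 x := by
        have := hχ1y x (hmem x hx); have := hχ2y x (hmem x hx); nlinarith
      have hsq := (hP.sqrt hPpos.ne').const_mul (ε₀ / y)
      have hexp : HasDerivWithinAt (fun s => η * Real.exp (K * s))
          (η * (K * Real.exp (K * x))) (Set.Ici x) x := by
        have hid : HasDerivAt (fun s : ℝ => K * s) K x := by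
          simpa using (hasDerivAt_id x).const_mul K
        have hexp' : HasDerivAt (fun s : ℝ => Real.exp (K * s)) (Real.exp (K * x) * K) x :=
          (Real.hasDerivAt_exp (K * x)).comp x hid
        have h3 := (hexp'.const_mul η).hasDerivWithinAt (s := Set.Ici x)
        have : η * (Real.exp (K * x) * K) = η * (K * Real.exp (K * x)) := by ring
        rwa [this] at h3
      exact (hsq.sub_const ε₀).add hexp
    case bound =>
      intro x hx heq
      -- notation
      set A : ℂ := h1 x - (xi (t₀ - x) : ℂ) with hA
      set Bc : ℂ := h2 x - (lam (t₀ - x) : ℂ) with hBc2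
      have hAne : A ≠ 0 := (H1 x (hmem x hx)).1
      have hBne : Bc ≠ 0 := (H2 x (hmem x hx)).1
      set na : ℝ := ‖A‖ with hna
      set nb : ℝ := ‖Bc‖ with hnb
      have hna1 : χ1 x ≤ na := by
        calc χ1 x = A.im := by simp [hA, hχ1]
        _ ≤ |A.im| := le_abs_self _
        _ ≤ na := Complex.abs_im_le_norm A
      have hnb1 : χ2 x ≤ nb := by
        calc χ2 x = Bc.im := by simp [hBc2, hχ2]
        _ ≤ |Bc.im| := le_abs_self _
        _ ≤ nb := Complex.abs_im_le_norm Bc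
      have hχ1pos : y ≤ χ1 x := hχ1y x (hmem x hx)
      have hχ2pos : y ≤ χ2 x := hχ2y x (hmem x hx)
      have hnapos : 0 < na := by linarith
      have hnbpos : 0 < nb := by linarith
      -- rewrite f' as a quotient
      have hfq : -2 / A + 2 / Bc = 2 * (A - Bc) / (A * Bc) := by
        field_simp
        ring
      have hABf : A - Bc = f x - ((xi (t₀ - x) - lam (t₀ - x) : ℝ) : ℂ) := by
        simp [hA, hBc2, hf]
        push_cast
        ring
      have habs : ‖A - Bc‖ ≤ B x + ε₀ := by
        rw [hABf]
        have htri : ‖f x - ((xi (t₀ - x) - lam (t₀ - x) : ℝ) : ℂ)‖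
            ≤ ‖f x‖ + ‖((xi (t₀ - x) - lam (t₀ - x) : ℝ) : ℂ)‖ := by
          exact norm_sub_le (f x) (((xi (t₀ - x) - lam (t₀ - x) : ℝ)) : ℂ)
        have hd : ‖((xi (t₀ - x) - lam (t₀ - x) : ℝ) : ℂ)‖ ≤ ε₀ := by
          rw [Complex.norm_real, Real.norm_eq_abs]
          exact hsup (t₀ - x) ⟨by linarith [hx.2], by linarith [hx.1]⟩
        linarith
      have hnorm : ‖-2 / A + 2 / Bc‖ = 2 * ‖A - Bc‖ / (na * nb) := by
        rw [hfq, norm_div, norm_mul, norm_mul]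
        simp [hna, hnb]
      -- numeric estimate
      have hE : (0:ℝ) < η * Real.exp (K * x) := by positivity
      have hs : Real.sqrt (χ1 x * χ2 x) > 0 := Real.sqrt_pos.2 (by nlinarith)
      have hseq : Real.sqrt (χ1 x * χ2 x) ^ 2 = χ1 x * χ2 x := Real.sq_sqrt (by nlinarith)
      rw [hnorm]
      calc 2 * ‖A - Bc‖ / (na * nb)
          ≤ 2 * (B x + ε₀) / (na * nb) := by gcongr
      _ = 2 * (ε₀ / y * Real.sqrt (χ1 x * χ2 x)) / (na * nb)
            + 2 * (η * Real.exp (K * x)) / (na * nb) := by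
            simp only [hB]
            ring
      _ < B' x := by
            simp only [hB']
            rw [Complex.normSq_eq_norm_sq, Complex.normSq_eq_norm_sq, ← hna, ← hnb]
            set ss := Real.sqrt (χ1 x * χ2 x) with hss
            have hsq2 : ss ^ 2 = χ1 x * χ2 x := hseq
            set E := η * Real.exp (K * x) with hEdef
            have hPd_ge : 4 * (χ1 x * χ2 x) / (na * nb)
                ≤ 2 * χ1 x / na ^ 2 * χ2 x + χ1 x * (2 * χ2 x / nb ^ 2) := by
              have e1 : 2 * χ1 x / na ^ 2 * χ2 x = 2 * (χ1 x * χ2 x) / na ^ 2 := by ring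
              have e2 : χ1 x * (2 * χ2 x / nb ^ 2) = 2 * (χ1 x * χ2 x) / nb ^ 2 := by ring
              rw [e1, e2, div_add_div _ _ (by positivity) (by positivity),
                div_le_div_iff₀ (by positivity) (by positivity)]
              have hP : 0 < χ1 x * χ2 x := by nlinarith
              nlinarith [mul_nonneg (mul_nonneg hP.le (mul_pos hnapos hnbpos).le)
                (sq_nonneg (na - nb))]
            have key1 : 2 * (ε₀ / y * ss) / (na * nb)
                ≤ ε₀ / y * ((2 * χ1 x / na ^ 2 * χ2 x + χ1 x * (2 * χ2 x / nb ^ 2))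
                    / (2 * ss)) := by
              have h4 : 4 * ss ^ 2 / (na * nb) / (2 * ss) = 2 * ss / (na * nb) := by
                field_simp
                ring
              calc 2 * (ε₀ / y * ss) / (na * nb) = ε₀ / y * (2 * ss / (na * nb)) := by ring
              _ = ε₀ / y * (4 * (χ1 x * χ2 x) / (na * nb) / (2 * ss)) := by
                  rw [← hsq2, h4]
              _ ≤ _ := by gcongr
            have key2 : 2 * E / (na * nb) < η * (K * Real.exp (K * x)) := by
              have hEK : η * (K * Real.exp (K * x)) = K * E := by rw [hEdef]; ring
              have hyy : y * y ≤ na * nb := by nlinarith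
              have hle : 2 * E / (na * nb) ≤ 2 * E / (y * y) := by gcongr
              have hlt : 2 * E / (y * y) < K * E := by
                rw [div_lt_iff₀ (by positivity)]
                have e3 : K * E * (y * y) = E * (K * y ^ 2) := by ring
                have e4 : K * y ^ 2 = 2 + y ^ 2 := by rw [hK]; field_simp
                rw [e3, e4]
                nlinarith
              rw [hEK]
              linarith
            linarith
  -- pass to the limit η → 0
  have hft : ‖f t₀‖ ≤ ε₀ / y * Real.sqrt (χ1 t₀ * χ2 t₀) - ε₀ := by
    apply le_of_forall_pos_le_add
    intro ε hε
    have := main (ε / Real.exp (K * t₀)) (by positivity)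
    calc ‖f t₀‖ ≤ ε₀ / y * Real.sqrt (χ1 t₀ * χ2 t₀) - ε₀
        + ε / Real.exp (K * t₀) * Real.exp (K * t₀) := this
    _ = ε₀ / y * Real.sqrt (χ1 t₀ * χ2 t₀) - ε₀ + ε := by
        congr 1
        field_simp
  -- final bound
  have hend : t₀ ∈ Set.Icc (0:ℝ) t₀ := right_mem_Icc.2 ht₀.le
  have hb1 := bounds1 t₀ hend
  have hb2 := bounds2 t₀ hend
  have hprod : χ1 t₀ * χ2 t₀ ≤ 4 * t₀ + y ^ 2 := by nlinarith [sq_nonneg (χ1 t₀ - χ2 t₀)]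
  have hsqrt : Real.sqrt (χ1 t₀ * χ2 t₀) ≤ Real.sqrt (4 * t₀ + y ^ 2) :=
    Real.sqrt_le_sqrt hprod
  calc ‖h1 t₀ - h2 t₀‖ = ‖f t₀‖ := by rw [hf]
  _ ≤ ε₀ / y * Real.sqrt (χ1 t₀ * χ2 t₀) - ε₀ := hft
  _ ≤ ε₀ / y * Real.sqrt (4 * t₀ + y ^ 2) - ε₀ := by gcongr
  _ = ε₀ * (Real.sqrt (4 * t₀ + y ^ 2) / y - 1) := by field_simp



set_option maxHeartbeats 2000000 in
/-- **Comparison of two Loewner traces on a fixed time interval (Lemma 3.1).** -/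
theorem stmt0
    (lam ξ : ℝ → ℝ) (hlam : ClassD lam)
    (hξcont : ContinuousOn ξ (Set.Icc 0 1)) (hξ0 : ξ 0 = 0)
    (flam fξ : ℝ → ℂ → ℂ)
    (hflam : IsInvLoewnerMap lam flam) (hfξ : IsInvLoewnerMap ξ fξ)
    (δ : ℝ → ℝ) (hδpos : ∀ ε > (0 : ℝ), 0 < δ ε)
    (hδ : ∀ ε > (0 : ℝ), ∀ t ∈ Set.Icc (0 : ℝ) 1, ∀ z₁ z₂ : ℂ, 0 < z₁.im → 0 < z₂.im →
      ‖z₁ - z₂‖ ≤ δ ε → ‖flam t z₁ - flam t z₂‖ ≤ ε)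
    (Δt t₀ t₁ t₂ : ℝ) (hΔt : 0 < Δt)
    (ht₀ : 0 ≤ t₀) (h01 : t₀ < t₁) (h12 : t₁ < t₂) (ht₂ : t₂ ≤ 1)
    (hgap1 : t₁ - t₀ ≤ Δt) (hgap2 : t₂ - t₁ ≤ Δt)
    (γξ γlam γξ0 γlam0 : ℝ → ℂ)
    -- (i) the trace points lie in the corresponding Loewner hulls:
    (hhullξ : ∀ s ∈ Set.Icc t₀ t₂,
      |(γξ0 s).re| ≤ (⨆ u : Set.Icc t₀ s, |ξ ↑u - ξ t₀|) ∧
      0 ≤ (γξ0 s).im ∧ (γξ0 s).im ≤ 2 * Real.sqrt (s - t₀))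
    (hhulllam : ∀ s ∈ Set.Icc t₀ t₂,
      |(γlam0 s).re| ≤ (⨆ u : Set.Icc t₀ s, |lam ↑u - lam t₀|) ∧
      0 ≤ (γlam0 s).im ∧ (γlam0 s).im ≤ 2 * Real.sqrt (s - t₀))
    -- (ii)
    (hlampos : ∀ t ∈ Set.Ioc t₀ t₂, 0 < (γlam0 t).im)
    -- (iii)
    (c : ℝ) (hc : c = ⨅ t : Set.Icc t₁ t₂, (γξ0 ↑t).im) (hcpos : 0 < c)
    -- (iv) the concatenation property of Loewner traces:
    (hconcat : ∀ t ∈ Set.Icc t₁ t₂,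
      γξ t = fξ t₀ (γξ0 t + (ξ t₀ : ℂ)) ∧ γlam t = flam t₀ (γlam0 t + (lam t₀ : ℂ)))
    (ε₀ ε₁ εbar a : ℝ)
    (hε₀pos : 0 < ε₀) (hε₁pos : 0 < ε₁) (hεbarpos : 0 < εbar) (hapos : 0 < a)
    (hsup0 : ∀ s ∈ Set.Icc (0 : ℝ) t₀, |ξ s - lam s| ≤ ε₀)
    (hsup1 : ∀ s ∈ Set.Icc t₀ t₂, |(ξ s - ξ t₀) - (lam s - lam t₀)| ≤ ε₁)
    (hε₀bar : ε₀ ≤ εbar) (hε₁bar : ε₁ ≤ εbar)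
    (hδa : 2 * oscOn lam (2 * Δt) + 2 * Real.sqrt (2 * Δt) + 5 * εbar ≤ δ a) :
    ∀ t ∈ Set.Icc t₁ t₂,
      ‖γξ t - γlam t‖ ≤ a + ε₀ * (Real.sqrt (4 * t₀ + c ^ 2) / c - 1) := by
  intro t ht
  have ht01 : t₀ ≤ 1 := by linarith
  have htt : t ∈ Set.Icc t₀ t₂ := ⟨by linarith [ht.1], ht.2⟩
  set zξ : ℂ := γξ0 t + (ξ t₀ : ℂ) with hzξ
  set zl : ℂ := γlam0 t + (lam t₀ : ℂ) with hzl
  have hImzξ : zξ.im = (γξ0 t).im := by simp [hzξ]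
  have hImzl : zl.im = (γlam0 t).im := by simp [hzl]
  -- c is a lower bound for the imaginary part
  have hcle : c ≤ (γξ0 t).im := by
    rw [hc]
    have hbdd : BddBelow (Set.range fun u : Set.Icc t₁ t₂ => (γξ0 ↑u).im) := by
      refine ⟨0, ?_⟩
      rintro _ ⟨u, rfl⟩
      exact (hhullξ ↑u ⟨by linarith [u.2.1], u.2.2⟩).2.1
    exact ciInf_le hbdd (⟨t, ht⟩ : Set.Icc t₁ t₂)
  have hImξpos : 0 < (γξ0 t).im := lt_of_lt_of_le hcpos hcle
  have hImlpos : 0 < (γlam0 t).im := hlampos t ⟨by linarith [ht.1], ht.2⟩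
  -- the oscillation bound
  obtain ⟨M, hM⟩ := (isCompact_Icc).exists_bound_of_continuousOn hlam.1
  have hbddosc : BddAbove {y : ℝ | ∃ u ∈ Set.Icc (0 : ℝ) 1, ∃ v ∈ Set.Icc (0 : ℝ) 1,
      |u - v| ≤ 2 * Δt ∧ y = |lam u - lam v|} := by
    refine ⟨2 * M, ?_⟩
    rintro r ⟨u, hu, v, hv, -, rfl⟩
    have h1 := hM u hu
    have h2 := hM v hv
    simp only [Real.norm_eq_abs] at h1 h2
    have : |lam u - lam v| ≤ |lam u| + |lam v| := abs_sub _ _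
    linarith
  have hosc : ∀ u ∈ Set.Icc (0:ℝ) 1, ∀ v ∈ Set.Icc (0:ℝ) 1, |u - v| ≤ 2 * Δt →
      |lam u - lam v| ≤ oscOn lam (2 * Δt) := by
    intro u hu v hv huv
    exact le_csSup hbddosc ⟨u, hu, v, hv, huv, rfl⟩
  have ht₀1 : t₀ ∈ Set.Icc (0:ℝ) 1 := ⟨ht₀, ht01⟩
  have hmemu : ∀ u : Set.Icc t₀ t, (u:ℝ) ∈ Set.Icc t₀ t₂ ∧ (u:ℝ) ∈ Set.Icc (0:ℝ) 1 ∧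
      |(u:ℝ) - t₀| ≤ 2 * Δt := by
    intro u
    have h1 := u.2.1
    have h2 := u.2.2
    refine ⟨⟨h1, by linarith [ht.2]⟩, ⟨by linarith, by linarith [ht.2]⟩, ?_⟩
    rw [abs_sub_comm, abs_of_nonpos (by linarith)]
    linarith [ht.2]
  haveI : Nonempty (Set.Icc t₀ t) := ⟨⟨t₀, le_refl t₀, by linarith [ht.1]⟩⟩
  have hsuplam : (⨆ u : Set.Icc t₀ t, |lam ↑u - lam t₀|) ≤ oscOn lam (2 * Δt) := by
    apply ciSup_le
    intro u
    exact hosc ↑u (hmemu u).2.1 t₀ ht₀1 (hmemu u).2.2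
  have hsupxi : (⨆ u : Set.Icc t₀ t, |ξ ↑u - ξ t₀|) ≤ oscOn lam (2 * Δt) + ε₁ := by
    apply ciSup_le
    intro u
    have h1 := hsup1 ↑u (hmemu u).1
    have h2 := hosc ↑u (hmemu u).2.1 t₀ ht₀1 (hmemu u).2.2
    have : |ξ ↑u - ξ t₀| ≤ |(ξ ↑u - ξ t₀) - (lam ↑u - lam t₀)| + |lam ↑u - lam t₀| := by
      have := abs_sub_abs_le_abs_sub (ξ ↑u - ξ t₀) (lam ↑u - lam t₀)
      have h3 := abs_sub (ξ ↑u - ξ t₀) (lam ↑u - lam t₀)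
      calc |ξ ↑u - ξ t₀| = |((ξ ↑u - ξ t₀) - (lam ↑u - lam t₀)) + (lam ↑u - lam t₀)| := by
            ring_nf
      _ ≤ _ := abs_add_le _ _
    linarith
  -- bounds at the point t
  obtain ⟨hξre, hξim0, hξim2⟩ := hhullξ t htt
  obtain ⟨hlre, hlim0, hlim2⟩ := hhulllam t htt
  have hsqrt2Δt : Real.sqrt (t - t₀) ≤ Real.sqrt (2 * Δt) :=
    Real.sqrt_le_sqrt (by linarith [ht.1, ht.2])
  -- the distance between the two starting points
  have hzdiff : ‖zξ - zl‖ ≤ δ a := by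
    have hre : |(zξ - zl).re| ≤ 2 * oscOn lam (2 * Δt) + ε₁ + ε₀ := by
      have e : (zξ - zl).re = ((γξ0 t).re - (γlam0 t).re) + (ξ t₀ - lam t₀) := by
        simp [hzξ, hzl]
        ring
      rw [e]
      have h0 := hsup0 t₀ ⟨le_refl 0 |>.trans ht₀, le_refl t₀⟩
      have h1 : |(γξ0 t).re| ≤ oscOn lam (2 * Δt) + ε₁ := le_trans hξre hsupxi
      have h2 : |(γlam0 t).re| ≤ oscOn lam (2 * Δt) := le_trans hlre hsuplam
      calc |((γξ0 t).re - (γlam0 t).re) + (ξ t₀ - lam t₀)|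
          ≤ |(γξ0 t).re - (γlam0 t).re| + |ξ t₀ - lam t₀| := abs_add_le _ _
      _ ≤ (|(γξ0 t).re| + |(γlam0 t).re|) + |ξ t₀ - lam t₀| := by
            have := abs_sub (γξ0 t).re (γlam0 t).re
            linarith
      _ ≤ _ := by linarith
    have him : |(zξ - zl).im| ≤ 2 * Real.sqrt (2 * Δt) := by
      have e : (zξ - zl).im = (γξ0 t).im - (γlam0 t).im := by simp [hzξ, hzl]
      rw [e, abs_le]
      constructor <;> nlinarith [hsqrt2Δt, hξim2, hlim2, hξim0, hlim0]
    calc ‖zξ - zl‖ ≤ |(zξ - zl).re| + |(zξ - zl).im| :=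
          Complex.norm_le_abs_re_add_abs_im _
    _ ≤ (2 * oscOn lam (2 * Δt) + ε₁ + ε₀) + 2 * Real.sqrt (2 * Δt) := by linarith
    _ ≤ 2 * oscOn lam (2 * Δt) + 2 * Real.sqrt (2 * Δt) + 5 * εbar := by linarith
    _ ≤ δ a := hδa
  -- second term: Loewner maps with the same driver at nearby points
  have hterm2 : ‖flam t₀ zξ - flam t₀ zl‖ ≤ a :=
    hδ a hapos t₀ ht₀1 zξ zl (by rw [hImzξ]; exact hImξpos) (by rw [hImzl]; exact hImlpos)
      hzdiff
  -- nonnegativity of the error term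
  have hrhs : 0 ≤ ε₀ * (Real.sqrt (4 * t₀ + c ^ 2) / c - 1) := by
    have h1 : c ≤ Real.sqrt (4 * t₀ + c ^ 2) := by
      have : c = Real.sqrt (c ^ 2) := (Real.sqrt_sq hcpos.le).symm
      rw [this]
      exact Real.sqrt_le_sqrt (by nlinarith [Real.sq_sqrt hcpos.le])
    have h2 : 1 ≤ Real.sqrt (4 * t₀ + c ^ 2) / c := by
      rw [le_div_iff₀ hcpos]
      linarith
    nlinarith
  have hgx := (hconcat t ht).1
  have hgl := (hconcat t ht).2
  rcases eq_or_lt_of_le ht₀ with h0 | h0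
  · -- case t₀ = 0
    subst h0
    rw [hgx, hgl, hfξ.1, hflam.1]
    have h2' := hterm2
    rw [hflam.1, hflam.1] at h2'
    linarith [h2', hrhs]
  · -- case 0 < t₀
    obtain ⟨h1, h10, H1, heq1⟩ := hfξ.2 t₀ ⟨h0, ht01⟩ zξ (by rw [hImzξ]; exact hImξpos)
    obtain ⟨h2, h20, H2, heq2⟩ := hflam.2 t₀ ⟨h0, ht01⟩ zξ (by rw [hImzξ]; exact hImξpos)
    have hcmp := loewner_compare ξ lam t₀ h0 ε₀ hε₀pos hsup0 zξ
      (by rw [hImzξ]; exact hImξpos) h1 h2 h10 h20 H1 H2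
    -- monotonicity in the imaginary part
    set y := zξ.im with hy
    have hyc : c ≤ y := by rw [hImzξ]; exact hcle
    have hypos : 0 < y := lt_of_lt_of_le hcpos hyc
    have hmono : Real.sqrt (4 * t₀ + y ^ 2) / y ≤ Real.sqrt (4 * t₀ + c ^ 2) / c := by
      rw [div_le_div_iff₀ hypos hcpos]
      have e1 : Real.sqrt (4 * t₀ + y ^ 2) * c = Real.sqrt ((4 * t₀ + y ^ 2) * c ^ 2) := by
        rw [Real.sqrt_mul (by positivity), Real.sqrt_sq hcpos.le]
      have e2 : Real.sqrt (4 * t₀ + c ^ 2) * y = Real.sqrt ((4 * t₀ + c ^ 2) * y ^ 2) := by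
        rw [Real.sqrt_mul (by positivity), Real.sqrt_sq hypos.le]
      rw [e1, e2]
      apply Real.sqrt_le_sqrt
      nlinarith [mul_nonneg ht₀ (mul_nonneg (sub_nonneg.2 hyc)
        (show (0:ℝ) ≤ y + c by linarith))]
    have hterm1 : ‖fξ t₀ zξ - flam t₀ zξ‖
        ≤ ε₀ * (Real.sqrt (4 * t₀ + c ^ 2) / c - 1) := by
      rw [heq1, heq2]
      calc ‖h1 t₀ - h2 t₀‖ ≤ ε₀ * (Real.sqrt (4 * t₀ + y ^ 2) / y - 1) := hcmp
      _ ≤ ε₀ * (Real.sqrt (4 * t₀ + c ^ 2) / c - 1) := by nlinarith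
    have tri : ‖fξ t₀ zξ - flam t₀ zl‖
        ≤ ‖fξ t₀ zξ - flam t₀ zξ‖ + ‖flam t₀ zξ - flam t₀ zl‖ := by
      simpa [Complex.dist_eq] using dist_triangle (fξ t₀ zξ) (flam t₀ zξ) (flam t₀ zl)
    rw [hgx, hgl]
    linarith [hterm1, hterm2, tri]
end

section
/- Size of Loewner hulls (Lemma 2.1): Let t > 0, let λ : [0,t] → ℝ be continuous, and let z ∈ ℍ. Suppose there are T ∈ (0, t] and a function g : [0,T) → ℂ such that g(0) = z, g(s) − λ(s) ≠ 0 and g'(s) = 2/(g(s) − λ(s)) for all s ∈ [0,T), and liminf_{s→T⁻} |g(s) − λ(s)| = 0 (i.e. the point z is swallowed by the Loewner flow by time t, so z lies in the hull K_t). Then |Re z| ≤ sup_{s∈[0,t]} |λ(s)| and Im z ≤ 2√t. -/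
open Set Filter Complex

private lemma reBound {T : ℝ} {lam : ℝ → ℝ} {g : ℝ → ℂ} {M : ℝ}
    (hM : ∀ s ∈ Set.Ico (0:ℝ) T, lam s ≤ M)
    (hode : ∀ s ∈ Set.Ico (0 : ℝ) T, g s - (lam s : ℂ) ≠ 0 ∧
      HasDerivWithinAt g (2 / (g s - (lam s : ℂ))) (Set.Ico 0 T) s)
    (hex : ∀ ε > 0, ∃ s ∈ Set.Ico (0:ℝ) T, ‖g s - (lam s : ℂ)‖ < ε) :
    (g 0).re ≤ M := by
  by_contra hcon
  push_neg at hcon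
  set x : ℝ → ℝ := fun s => (g s).re with hxdef
  have hcont : ContinuousOn x (Ico 0 T) := fun s hs =>
    Complex.continuous_re.continuousAt.comp_continuousWithinAt (hode s hs).2.continuousWithinAt
  have hxder : ∀ s ∈ Ico 0 T,
      HasDerivWithinAt x ((2 / (g s - (lam s : ℂ))).re) (Ico 0 T) s := fun s hs =>
    Complex.reCLM.hasFDerivAt.comp_hasDerivWithinAt s (hode s hs).2
  obtain ⟨s₁, hs₁, hfs₁⟩ := hex ((g 0).re - M) (by simpa using hcon)
  -- Claim: x 0 ≤ x s₁
  have hclaim : x 0 ≤ x s₁ := by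
    by_contra hx1
    push_neg at hx1
    set m : ℝ := max M (x s₁) with hmdef
    have hm : m < x 0 := max_lt hcon hx1
    set c : ℝ := (m + x 0) / 2 with hcdef
    have hmc : m < c := by rw [hcdef]; linarith
    have hcx0 : c < x 0 := by rw [hcdef]; linarith
    set D : Set ℝ := Icc 0 s₁ ∩ x ⁻¹' Iic c with hDdef
    have hsub : Icc 0 s₁ ⊆ Ico 0 T := Set.Icc_subset_Ico_right hs₁.2
    have hDclosed : IsClosed D :=
      (hcont.mono hsub).preimage_isClosed_of_isClosed isClosed_Icc isClosed_Iic
    have hDcomp : IsCompact D :=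
      isCompact_Icc.of_isClosed_subset hDclosed Set.inter_subset_left
    have hs₁D : s₁ ∈ D := ⟨⟨hs₁.1, le_refl _⟩, le_of_lt (lt_of_le_of_lt (le_max_right M _) hmc)⟩
    set σ : ℝ := sInf D with hσdef
    have hσD : σ ∈ D := hDcomp.sInf_mem ⟨s₁, hs₁D⟩
    have hσpos : 0 < σ := by
      rcases hσD.1.1.lt_or_eq with h | h
      · exact h
      · exfalso; have := hσD.2; rw [← h] at this
        exact absurd this (not_le.2 hcx0)
    have hgt : ∀ u, 0 ≤ u → u < σ → c < x u := by
      intro u hu0 huσ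
      by_contra hxu
      push_neg at hxu
      have huD : u ∈ D := ⟨⟨hu0, le_trans huσ.le hσD.1.2⟩, hxu⟩
      exact absurd (csInf_le hDcomp.bddBelow huD) (not_le.2 huσ)
    have hsubσ : Icc 0 σ ⊆ Ico 0 T := fun u hu =>
      hsub ⟨hu.1, le_trans hu.2 hσD.1.2⟩
    have hmono : MonotoneOn x (Icc 0 σ) := by
      have hderAt : ∀ u ∈ Ioo 0 σ, HasDerivAt x ((2 / (g u - (lam u : ℂ))).re) u := by
        intro u hu
        have huIco : u ∈ Ico 0 T := hsubσ ⟨hu.1.le, hu.2.le⟩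
        exact (hxder u huIco).hasDerivAt (Ico_mem_nhds hu.1 (lt_of_le_of_lt hu.2.le
          (lt_of_le_of_lt hσD.1.2 hs₁.2)))
      apply monotoneOn_of_deriv_nonneg (convex_Icc 0 σ) (hcont.mono hsubσ)
      · rw [interior_Icc]
        exact fun u hu => (hderAt u hu).differentiableAt.differentiableWithinAt
      · rw [interior_Icc]
        intro u hu
        rw [(hderAt u hu).deriv]
        have huIco : u ∈ Ico 0 T := hsubσ ⟨hu.1.le, hu.2.le⟩
        have hre : 0 ≤ (g u - (lam u : ℂ)).re := by
          have h1 : c < x u := hgt u hu.1.le hu.2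
          have h2 : lam u ≤ M := hM u huIco
          have h3 : M ≤ m := le_max_left _ _
          simp only [Complex.sub_re, Complex.ofReal_re]
          have : (g u).re = x u := rfl
          linarith
        rw [Complex.div_re]
        have hn : 0 ≤ Complex.normSq (g u - (lam u : ℂ)) := Complex.normSq_nonneg _
        simp only [Complex.re_ofNat, Complex.im_ofNat, zero_mul, zero_div, add_zero]
        exact div_nonneg (by linarith) hn
    have h0σ : x 0 ≤ x σ := hmono ⟨le_refl _, hσpos.le⟩ ⟨hσpos.le, le_refl _⟩ hσpos.le
    have : x σ ≤ c := hσD.2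
    linarith
  -- derive contradiction
  have hge : (g s₁ - (lam s₁ : ℂ)).re ≤ ‖g s₁ - (lam s₁ : ℂ)‖ :=
    Complex.re_le_norm _
  have : (g s₁ - (lam s₁ : ℂ)).re = x s₁ - lam s₁ := by
    simp [Complex.sub_re, hxdef]
  have hlamle : lam s₁ ≤ M := hM s₁ hs₁
  linarith

/-- **Size of Loewner hulls (Lemma 2.1).**
If `z ∈ ℍ` is swallowed by the forward Loewner flow driven by `λ` by time `t`
(i.e. the solution `g` of `g' = 2/(g - λ)`, `g 0 = z` exists on `[0, T)` for some
`T ≤ t` with `liminf_{s → T⁻} |g s - λ s| = 0`), then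
`|Re z| ≤ sup_{s ∈ [0,t]} |λ s|` and `Im z ≤ 2 √t`. -/
theorem stmt2 (t : ℝ) (ht : 0 < t) (lam : ℝ → ℝ) (hlam : ContinuousOn lam (Set.Icc 0 t))
    (z : ℂ) (hz : 0 < z.im)
    (T : ℝ) (hT0 : 0 < T) (hTt : T ≤ t)
    (g : ℝ → ℂ) (hg0 : g 0 = z)
    (hode : ∀ s ∈ Set.Ico (0 : ℝ) T, g s - (lam s : ℂ) ≠ 0 ∧
      HasDerivWithinAt g (2 / (g s - (lam s : ℂ))) (Set.Ico 0 T) s)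
    (hblow : Filter.liminf (fun s => ‖g s - (lam s : ℂ)‖)
      (nhdsWithin T (Set.Iio T)) = 0) :
    |z.re| ≤ (⨆ s : Set.Icc (0 : ℝ) t, |lam s|) ∧ z.im ≤ 2 * Real.sqrt t := by
  set M : ℝ := ⨆ s : Set.Icc (0 : ℝ) t, |lam s| with hMdef
  have hbdd : BddAbove (Set.range fun s : Set.Icc (0:ℝ) t => |lam s|) := by
    rw [← Set.image_eq_range (fun s => |lam s|) (Set.Icc (0:ℝ) t)]
    exact (isCompact_Icc.image_of_continuousOn hlam.abs).bddAbove
  have hMb : ∀ s ∈ Set.Icc (0:ℝ) t, |lam s| ≤ M := fun s hs =>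
    le_ciSup hbdd (⟨s, hs⟩ : Set.Icc (0:ℝ) t)
  have hIcoIcc : ∀ s ∈ Set.Ico (0:ℝ) T, s ∈ Set.Icc (0:ℝ) t := fun s hs =>
    ⟨hs.1, le_trans hs.2.le hTt⟩
  have hIoo : Ioo 0 T ∈ nhdsWithin T (Set.Iio T) :=
    Ioo_mem_nhdsLT_of_mem ⟨hT0, le_refl T⟩
  -- key: points arbitrarily close to swallowing
  have hex : ∀ ε > 0, ∃ s ∈ Set.Ico (0:ℝ) T, ‖g s - (lam s : ℂ)‖ < ε := by
    intro ε hε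
    by_contra hcon
    push_neg at hcon
    have hbd : ∀ s ∈ Set.Ico (0:ℝ) T, ‖g s - g 0‖ ≤ 2 / ε * T := by
      intro s hs
      have key := (convex_Ico (0:ℝ) T).norm_image_sub_le_of_norm_hasDerivWithin_le
        (f' := fun u => 2 / (g u - (lam u : ℂ))) (fun u hu => (hode u hu).2) (C := 2/ε)
        (fun u hu => by
          rw [norm_div]
          have h1 : ε ≤ ‖g u - (lam u : ℂ)‖ := hcon u hu
          have : ‖(2:ℂ)‖ = 2 := by norm_num
          rw [this]
          exact div_le_div_of_nonneg_left (by norm_num) hε h1)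
        ⟨le_refl _, hT0⟩ hs
      calc ‖g s - g 0‖ ≤ 2/ε * ‖s - 0‖ := key
        _ ≤ 2/ε * T := by
            rw [sub_zero, Real.norm_eq_abs, _root_.abs_of_nonneg hs.1]
            exact mul_le_mul_of_nonneg_left hs.2.le (by positivity)
    set C : ℝ := ‖g 0‖ + 2/ε*T + M with hCdef
    have hC : ∀ᶠ s in nhdsWithin T (Set.Iio T),
        ‖g s - (lam s : ℂ)‖ ≤ C := by
      filter_upwards [hIoo] with s hs
      have hsIco : s ∈ Set.Ico (0:ℝ) T := ⟨hs.1.le, hs.2⟩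
      have h1 : ‖g s - g 0‖ ≤ 2/ε*T := hbd s hsIco
      have h2 : |lam s| ≤ M := hMb s (hIcoIcc s hsIco)
      have h3 : ‖g s - (lam s : ℂ)‖ ≤ ‖g s - g 0‖ + ‖g 0‖ + ‖(lam s : ℂ)‖ := by
        have : g s - (lam s : ℂ) = (g s - g 0) + g 0 + -(lam s : ℂ) := by ring
        rw [this]
        calc ‖(g s - g 0) + g 0 + -(lam s : ℂ)‖
            ≤ ‖(g s - g 0) + g 0‖ + ‖-(lam s : ℂ)‖ := norm_add_le _ _
          _ ≤ ‖g s - g 0‖ + ‖g 0‖ + ‖(lam s : ℂ)‖ := by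
              rw [norm_neg]; exact add_le_add_left (norm_add_le (g s - g 0) (g 0)) _
      rw [Complex.norm_real, Real.norm_eq_abs] at h3
      rw [hCdef]; linarith
    have hev : ∀ᶠ s in nhdsWithin T (Set.Iio T),
        ε ≤ ‖g s - (lam s : ℂ)‖ := by
      filter_upwards [hIoo] with s hs
      exact hcon s ⟨hs.1.le, hs.2⟩
    have : ε ≤ Filter.liminf (fun s => ‖g s - (lam s : ℂ)‖)
        (nhdsWithin T (Set.Iio T)) :=
      Filter.le_liminf_of_le (Filter.isCoboundedUnder_ge_of_eventually_le _ hC) hev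
    rw [hblow] at this
    linarith
  constructor
  · -- real part
    have hre1 : z.re ≤ M := by
      rw [← hg0]
      exact reBound (fun s hs => le_trans (le_abs_self _) (hMb s (hIcoIcc s hs))) hode hex
    have hre2 : -z.re ≤ M := by
      set g2 : ℝ → ℂ := fun s => -((starRingEnd ℂ) (g s)) with hg2def
      set lam2 : ℝ → ℝ := fun s => -lam s with hlam2def
      have hkey : ∀ s, g2 s - (lam2 s : ℂ) = -((starRingEnd ℂ) (g s - (lam s : ℂ))) := by
        intro s
        simp only [hg2def, hlam2def, map_sub, Complex.conj_ofReal, Complex.ofReal_neg]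
        ring
      have hode2 : ∀ s ∈ Set.Ico (0 : ℝ) T, g2 s - (lam2 s : ℂ) ≠ 0 ∧
          HasDerivWithinAt g2 (2 / (g2 s - (lam2 s : ℂ))) (Set.Ico 0 T) s := by
        intro s hs
        obtain ⟨hne, hder⟩ := hode s hs
        constructor
        · rw [hkey s]
          simp only [neg_ne_zero, map_ne_zero]
          exact hne
        · have hd2 : HasDerivWithinAt g2
              (-((starRingEnd ℂ) (2 / (g s - (lam s : ℂ))))) (Set.Ico 0 T) s := by
            have := Complex.conjCLE.hasFDerivAt.comp_hasDerivWithinAt s hder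
            exact this.neg
          convert hd2 using 1
          rw [hkey s, map_div₀, div_neg, map_ofNat]
      have hex2 : ∀ ε > 0, ∃ s ∈ Set.Ico (0:ℝ) T,
          ‖g2 s - (lam2 s : ℂ)‖ < ε := by
        intro ε hε
        obtain ⟨s, hs, hlt⟩ := hex ε hε
        refine ⟨s, hs, ?_⟩
        rw [hkey s, norm_neg, Complex.norm_conj]
        exact hlt
      have := reBound (lam := lam2) (g := g2) (M := M)
        (fun s hs => le_trans (neg_le_abs _) (hMb s (hIcoIcc s hs))) hode2 hex2
      simp only [hg2def, hg0, Complex.neg_re, Complex.conj_re] at this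
      exact this
    exact abs_le.2 ⟨by linarith, hre1⟩
  · -- imaginary part
    set y : ℝ → ℝ := fun s => (g s).im with hydef
    set F : ℝ → ℝ := fun s => y s ^ 2 + 4 * s with hFdef
    have hyder : ∀ s ∈ Set.Ico (0:ℝ) T,
        HasDerivWithinAt y ((2 / (g s - (lam s : ℂ))).im) (Set.Ico 0 T) s := fun s hs =>
      Complex.imCLM.hasFDerivAt.comp_hasDerivWithinAt s (hode s hs).2
    have hFder : ∀ s ∈ Set.Ico (0:ℝ) T,
        HasDerivWithinAt F (2 * y s * (2 / (g s - (lam s : ℂ))).im + 4)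
          (Set.Ico 0 T) s := by
      intro s hs
      have h1 : HasDerivWithinAt (fun u => y u ^ 2)
          (((2:ℕ):ℝ) * y s ^ (2 - 1) * (2 / (g s - (lam s : ℂ))).im) (Set.Ico 0 T) s :=
        ((hyder s hs).pow 2)
      have h2 : HasDerivWithinAt (fun u : ℝ => 4 * u) 4 (Set.Ico 0 T) s := by
        simpa using (hasDerivWithinAt_id s (Set.Ico 0 T)).const_mul (4:ℝ)
      have := h1.add h2
      convert this using 1
      · rfl
      · rfl
      · rfl
      push_cast
      ring
    have hFcont : ContinuousOn F (Set.Ico 0 T) := fun s hs =>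
      (hFder s hs).continuousWithinAt
    have hFmono : MonotoneOn F (Set.Ico 0 T) := by
      have hderAt : ∀ u ∈ Ioo 0 T,
          HasDerivAt F (2 * y u * (2 / (g u - (lam u : ℂ))).im + 4) u := fun u hu =>
        (hFder u ⟨hu.1.le, hu.2⟩).hasDerivAt (Ico_mem_nhds hu.1 hu.2)
      apply monotoneOn_of_deriv_nonneg (convex_Ico 0 T) hFcont
      · rw [interior_Ico]
        exact fun u hu => (hderAt u hu).differentiableAt.differentiableWithinAt
      · rw [interior_Ico]
        intro u hu
        rw [(hderAt u hu).deriv]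
        have hne := (hode u ⟨hu.1.le, hu.2⟩).1
        have hn : 0 < Complex.normSq (g u - (lam u : ℂ)) := Complex.normSq_pos.2 hne
        have him : (g u - (lam u : ℂ)).im = y u := by simp [hydef]
        have hsq : y u ^ 2 ≤ Complex.normSq (g u - (lam u : ℂ)) := by
          rw [Complex.normSq_apply, him]
          nlinarith [sq_nonneg (g u - (lam u : ℂ)).re]
        rw [Complex.div_im, him]
        simp only [Complex.re_ofNat, Complex.im_ofNat]
        have hkey : 2 * y u * (0 * (g u - (lam u : ℂ)).re /
            Complex.normSq (g u - (lam u : ℂ)) -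
            2 * y u / Complex.normSq (g u - (lam u : ℂ))) + 4 =
            4 - 4 * (y u ^ 2 / Complex.normSq (g u - (lam u : ℂ))) := by
          field_simp
          ring
        rw [hkey]
        have : y u ^ 2 / Complex.normSq (g u - (lam u : ℂ)) ≤ 1 :=
          (div_le_one hn).2 hsq
        linarith
    have hbound : ∀ ε > 0, y 0 ^ 2 ≤ ε ^ 2 + 4 * t := by
      intro ε hε
      obtain ⟨s, hs, hlt⟩ := hex ε hε
      have h1 : F 0 ≤ F s := hFmono ⟨le_refl _, hT0⟩ hs hs.1
      have h2 : y s ^ 2 ≤ ‖g s - (lam s : ℂ)‖ ^ 2 := by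
        have him : (g s - (lam s : ℂ)).im = y s := by simp [hydef]
        have h := Complex.abs_im_le_norm (g s - (lam s : ℂ))
        rw [him] at h
        rw [← _root_.sq_abs (y s)]
        exact pow_le_pow_left₀ (abs_nonneg _) h 2
      have h3 : ‖g s - (lam s : ℂ)‖ ^ 2 < ε ^ 2 := by
        have := norm_nonneg (g s - (lam s : ℂ))
        nlinarith
      have h4 : s < t := lt_of_lt_of_le hs.2 hTt
      simp only [hFdef] at h1
      nlinarith
    have hy0 : y 0 ^ 2 ≤ 4 * t := by
      by_contra hcon
      push_neg at hcon
      have hpos : 0 < (y 0 ^ 2 - 4 * t) / 2 := by linarith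
      set ε : ℝ := Real.sqrt ((y 0 ^ 2 - 4 * t) / 2) with hεdef
      have hεpos : 0 < ε := Real.sqrt_pos.2 hpos
      have hεsq : ε ^ 2 = (y 0 ^ 2 - 4 * t) / 2 := Real.sq_sqrt hpos.le
      have := hbound ε hεpos
      rw [hεsq] at this
      linarith
    have hy0z : y 0 = z.im := by rw [hydef]; simp [hg0]
    rw [hy0z] at hy0
    have h4t : (4:ℝ) * t = (2 * Real.sqrt t) ^ 2 := by
      rw [mul_pow, Real.sq_sqrt ht.le]; ring
    rw [h4t] at hy0
    nlinarith [Real.sqrt_nonneg t, hz]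
end

section
/- Difference of two inverse Loewner maps (inequality (2.2) of Lemma 2.3): Let t > 0, let V¹, V² : [0,t] → ℝ be continuous, and let z = x + iy ∈ ℍ (so y > 0). For j = 1, 2, let h^j : [0,t] → ℂ satisfy h^j(0) = z, h^j(s) − V^j(s) ≠ 0 and (h^j)'(s) = −2/(h^j(s) − V^j(s)) for all s ∈ [0,t] (such solutions exist on all of [0,t] since z ∈ ℍ). Then |h¹(t) − h²(t)| ≤ (sup_{s∈[0,t]} |V¹(s) − V²(s)|) · (√(4t + y²)/y − 1). Since the inverse Loewner map f^U_t(z) equals the time-t value of the reverse flow with driver s ↦ U(t−s), this is exactly the estimate |f¹_t(z) − f²_t(z)| ≤ ‖U¹ − U²‖_{∞,[0,t]} (√(4t + y²)/y − 1) for inverse Loewner maps with driving terms U¹, U². -/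
open Set

private lemma deriv_Ici_of_Icc {E : Type*} [NormedAddCommGroup E] [NormedSpace ℝ E]
    {f : ℝ → E} {f' : E} {t x : ℝ} (hx0 : 0 ≤ x) (hxt : x < t)
    (h : HasDerivWithinAt f f' (Set.Icc 0 t) x) : HasDerivWithinAt f f' (Set.Ici x) x := by
  refine h.mono_of_mem_nhdsWithin ?_
  have h1 : Set.Iic t ∈ nhdsWithin x (Set.Ici x) :=
    mem_nhdsWithin_of_mem_nhds (Iic_mem_nhds hxt)
  filter_upwards [h1, self_mem_nhdsWithin] with u hu1 hu2
  exact ⟨le_trans hx0 hu2, hu1⟩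

private lemma amgm2 {α β : ℝ} (hα : 0 < α) (hβ : 0 < β) : 2 / (α * β) ≤ 1 / α ^ 2 + 1 / β ^ 2 := by
  rw [div_add_div _ _ (by positivity) (by positivity),
    div_le_div_iff₀ (by positivity) (by positivity)]
  nlinarith [mul_nonneg (mul_pos hα hβ).le (sq_nonneg (α - β))]

private lemma flow_aux (t : ℝ) (ht : 0 < t) (V : ℝ → ℝ) (hV : ContinuousOn V (Set.Icc 0 t))
    (y : ℝ) (hy : 0 < y) (h : ℝ → ℂ) (h0 : (h 0).im = y)
    (hode : ∀ s ∈ Set.Icc (0 : ℝ) t, h s - (V s : ℂ) ≠ 0 ∧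
      HasDerivWithinAt h (-2 / (h s - (V s : ℂ))) (Set.Icc 0 t) s) :
    ∃ A : ℝ → ℝ, A 0 = 0 ∧
      (∀ s ∈ Set.Icc (0 : ℝ) t, HasDerivAt A (2 / ‖h s - (V s : ℂ)‖ ^ 2) s) ∧
      (∀ s ∈ Set.Icc (0 : ℝ) t, (h s).im = y * Real.exp (A s)) ∧
      Real.exp (A t) ≤ Real.sqrt (4 * t + y ^ 2) / y := by
  have hw : ∀ s ∈ Icc (0:ℝ) t, h s - (V s : ℂ) ≠ 0 := fun s hs => (hode s hs).1
  have hh_cont : ContinuousOn h (Icc 0 t) := fun s hs => ((hode s hs).2).continuousWithinAt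
  have hw_cont : ContinuousOn (fun s => h s - (V s : ℂ)) (Icc 0 t) :=
    hh_cont.sub (Complex.continuous_ofReal.comp_continuousOn hV)
  set a : ℝ → ℝ := fun s => 2 / ‖h s - (V s : ℂ)‖ ^ 2 with ha_def
  have ha_pos : ∀ s ∈ Icc (0:ℝ) t, 0 < a s := by
    intro s hs
    have h1 : 0 < ‖h s - (V s : ℂ)‖ := norm_pos_iff.mpr (hw s hs)
    positivity
  have ha_cont : ContinuousOn a (Icc 0 t) := by
    apply ContinuousOn.div continuousOn_const
      ((continuous_norm.comp_continuousOn hw_cont).pow 2)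
    exact fun s hs => pow_ne_zero _ (norm_ne_zero_iff.mpr (hw s hs))
  set abar : ℝ → ℝ := fun s => a ((projIcc 0 t ht.le s : Icc (0:ℝ) t) : ℝ) with habar_def
  have habar_cont : Continuous abar :=
    ha_cont.comp_continuous (continuous_subtype_val.comp continuous_projIcc)
      (fun s => (projIcc 0 t ht.le s).2)
  have habar_eq : ∀ s ∈ Icc (0:ℝ) t, abar s = a s := by
    intro s hs
    simp only [habar_def, projIcc_of_mem ht.le hs]
  set A : ℝ → ℝ := fun s => ∫ u in (0:ℝ)..s, abar u with hA_def
  have hA_deriv : ∀ s, HasDerivAt A (abar s) s := fun s =>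
    (habar_cont.integral_hasStrictDerivAt 0 s).hasDerivAt
  have hA0 : A 0 = 0 := intervalIntegral.integral_same
  -- derivative of the imaginary part
  have hg_deriv : ∀ s ∈ Icc (0:ℝ) t,
      HasDerivWithinAt (fun u => (h u).im) (a s * (h s).im) (Icc (0:ℝ) t) s := by
    intro s hs
    have hd := (hode s hs).2
    have him := Complex.imCLM.hasFDerivAt.comp_hasDerivWithinAt s hd
    have heq : Complex.imCLM (-2 / (h s - (V s : ℂ))) = a s * (h s).im := by
      have hns : (0:ℝ) < Complex.normSq (h s - (V s : ℂ)) := Complex.normSq_pos.2 (hw s hs)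
      have him2 : (h s).im = (h s - (V s : ℂ)).im := by simp
      rw [Complex.imCLM_apply, him2, ha_def]
      simp [Complex.div_im, Complex.sq_norm]
      field_simp
    rw [heq] at him
    exact him
  -- the integrating factor is constant
  have hpsi : ∀ s ∈ Icc (0:ℝ) t, (h s).im * Real.exp (-A s) = y := by
    have hcont : ContinuousOn (fun s => (h s).im * Real.exp (-A s)) (Icc 0 t) := by
      apply (Complex.continuous_im.comp_continuousOn hh_cont).mul
      have : Continuous fun s => Real.exp (-A s) := by
        apply Real.continuous_exp.comp
        exact (continuous_iff_continuousAt.2 fun s => (hA_deriv s).continuousAt).neg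
      exact this.continuousOn
    have hderiv : ∀ x ∈ Ico (0:ℝ) t,
        HasDerivWithinAt (fun s => (h s).im * Real.exp (-A s)) 0 (Ici x) x := by
      intro x hx
      have hgI := deriv_Ici_of_Icc hx.1 hx.2 (hg_deriv x ⟨hx.1, hx.2.le⟩)
      have hexp : HasDerivAt (fun s => Real.exp (-A s)) (Real.exp (-A x) * (-abar x)) x :=
        HasDerivAt.exp (hA_deriv x).neg
      have := hgI.mul hexp.hasDerivWithinAt
      refine this.congr_deriv ?_
      rw [habar_eq x ⟨hx.1, hx.2.le⟩]
      ring
    have := constant_of_has_deriv_right_zero hcont hderiv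
    intro s hs
    rw [this s hs, h0, hA0]
    simp
  have him_eq : ∀ s ∈ Icc (0:ℝ) t, (h s).im = y * Real.exp (A s) := by
    intro s hs
    have h1 := hpsi s hs
    have h2 : Real.exp (-A s) ≠ 0 := Real.exp_ne_zero _
    field_simp [Real.exp_neg] at h1 ⊢
    rw [← h1, mul_assoc, ← Real.exp_add, neg_add_cancel, Real.exp_zero, mul_one]
  -- upper bound for the imaginary part
  have him_sq : (h t).im ^ 2 ≤ y ^ 2 + 4 * t := by
    have := image_le_of_deriv_right_le_deriv_boundary
      (f := fun s => (h s).im ^ 2) (f' := fun s => 2 * (h s).im * (abar s * (h s).im))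
      (a := (0:ℝ)) (b := t)
      (B := fun s => y ^ 2 + 4 * s) (B' := fun _ => 4) ?hf ?hf' ?ha ?hB ?hB' ?bound
        (right_mem_Icc.2 ht.le)
    · exact this
    case hf => exact ((Complex.continuous_im.comp_continuousOn hh_cont).pow 2)
    case hf' =>
      intro x hx
      have hgI := deriv_Ici_of_Icc hx.1 hx.2 (hg_deriv x ⟨hx.1, hx.2.le⟩)
      have := hgI.pow 2
      refine this.congr_deriv ?_
      show _ = 2 * (h x).im * (abar x * (h x).im)
      rw [habar_eq x ⟨hx.1, hx.2.le⟩]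
      ring
    case ha =>
      show (h 0).im ^ 2 ≤ y ^ 2 + 4 * 0
      rw [h0]; norm_num
    case hB =>
      exact (continuous_const.add (continuous_const.mul continuous_id)).continuousOn
    case hB' =>
      intro x hx
      simpa using ((hasDerivAt_id x).const_mul 4).const_add (y ^ 2) |>.hasDerivWithinAt
    case bound =>
      intro x hx
      have hxmem : x ∈ Icc (0:ℝ) t := ⟨hx.1, hx.2.le⟩
      show 2 * (h x).im * (abar x * (h x).im) ≤ 4
      rw [habar_eq x hxmem]
      have h1 : 0 < ‖h x - (V x : ℂ)‖ := norm_pos_iff.mpr (hw x hxmem)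
      have h2 : |(h x).im| ≤ ‖h x - (V x : ℂ)‖ := by
        have : (h x).im = (h x - (V x : ℂ)).im := by simp
        rw [this]
        exact Complex.abs_im_le_norm _
      have h3 : (h x).im ^ 2 ≤ ‖h x - (V x : ℂ)‖ ^ 2 := by
        rw [← sq_abs ((h x).im)]
        exact pow_le_pow_left₀ (abs_nonneg _) h2 2
      have ha2 : a x * ‖h x - (V x : ℂ)‖ ^ 2 = 2 := by
        show 2 / ‖h x - (V x : ℂ)‖ ^ 2 * ‖h x - (V x : ℂ)‖ ^ 2 = 2
        field_simp
      have hapos := (ha_pos x hxmem).le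
      calc 2 * (h x).im * (a x * (h x).im) = 2 * (a x * (h x).im ^ 2) := by ring
        _ ≤ 2 * (a x * ‖h x - (V x : ℂ)‖ ^ 2) := by gcongr
        _ = 4 := by rw [ha2]; norm_num
  refine ⟨A, hA0, ?_, him_eq, ?_⟩
  · intro s hs
    have := hA_deriv s
    rwa [habar_eq s hs] at this
  · have hgt : (h t).im = y * Real.exp (A t) := him_eq t (right_mem_Icc.2 ht.le)
    have h1 : y * Real.exp (A t) ≤ Real.sqrt (4 * t + y ^ 2) := by
      rw [← hgt]
      have h2 : (h t).im = Real.sqrt ((h t).im ^ 2) := by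
        rw [Real.sqrt_sq]
        rw [hgt]; positivity
      rw [h2]
      apply Real.sqrt_le_sqrt
      linarith
    rw [le_div_iff₀ hy]
    linarith [h1]

/-- **Difference of two inverse Loewner maps (inequality (2.2) of Lemma 2.3).**
If `h¹, h²` solve the reverse Loewner equation on `[0,t]` with continuous drivers
`V¹, V²` and common initial value `z = x + iy ∈ ℍ`, then
`|h¹(t) - h²(t)| ≤ (sup_{s∈[0,t]} |V¹ s - V² s|) (√(4t + y²)/y - 1)`. -/
theorem stmt3 (t : ℝ) (ht : 0 < t) (V₁ V₂ : ℝ → ℝ)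
    (hV₁ : ContinuousOn V₁ (Set.Icc 0 t)) (hV₂ : ContinuousOn V₂ (Set.Icc 0 t))
    (x y : ℝ) (hy : 0 < y) (z : ℂ) (hz : z = x + y * Complex.I)
    (h₁ h₂ : ℝ → ℂ) (h₁0 : h₁ 0 = z) (h₂0 : h₂ 0 = z)
    (hode₁ : ∀ s ∈ Set.Icc (0 : ℝ) t, h₁ s - (V₁ s : ℂ) ≠ 0 ∧
      HasDerivWithinAt h₁ (-2 / (h₁ s - (V₁ s : ℂ))) (Set.Icc 0 t) s)
    (hode₂ : ∀ s ∈ Set.Icc (0 : ℝ) t, h₂ s - (V₂ s : ℂ) ≠ 0 ∧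
      HasDerivWithinAt h₂ (-2 / (h₂ s - (V₂ s : ℂ))) (Set.Icc 0 t) s) :
    ‖h₁ t - h₂ t‖ ≤
      (⨆ s : Set.Icc (0 : ℝ) t, |V₁ s - V₂ s|) * (Real.sqrt (4 * t + y ^ 2) / y - 1) := by
  have hzim : z.im = y := by rw [hz]; simp
  obtain ⟨A₁, hA₁0, hA₁d, hg₁, hE₁⟩ := flow_aux t ht V₁ hV₁ y hy h₁ (by rw [h₁0, hzim]) hode₁
  obtain ⟨A₂, hA₂0, hA₂d, hg₂, hE₂⟩ := flow_aux t ht V₂ hV₂ y hy h₂ (by rw [h₂0, hzim]) hode₂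
  set a₁ : ℝ → ℝ := fun s => 2 / ‖h₁ s - (V₁ s : ℂ)‖ ^ 2 with ha₁def
  set a₂ : ℝ → ℝ := fun s => 2 / ‖h₂ s - (V₂ s : ℂ)‖ ^ 2 with ha₂def
  set ε := ⨆ s : Set.Icc (0:ℝ) t, |V₁ s - V₂ s| with hεdef
  have hbdd : BddAbove (Set.range fun s : Set.Icc (0:ℝ) t => |V₁ ↑s - V₂ ↑s|) := by
    obtain ⟨c, hc⟩ := (isCompact_Icc.image_of_continuousOn ((hV₁.sub hV₂).abs)).bddAbove
    refine ⟨c, ?_⟩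
    rintro v ⟨s, rfl⟩
    exact hc (Set.mem_image_of_mem _ s.2)
  have hεle : ∀ s ∈ Set.Icc (0:ℝ) t, |V₁ s - V₂ s| ≤ ε := fun s hs => le_ciSup hbdd ⟨s, hs⟩
  have hε0 : 0 ≤ ε := le_trans (abs_nonneg _) (hεle 0 ⟨le_refl 0, ht.le⟩)
  set C : ℝ → ℝ := fun s => (A₁ s + A₂ s) / 2 with hCdef
  set M := Real.sqrt (4 * t + y ^ 2) / y with hMdef
  have hM0 : 0 ≤ M := by positivity
  have hexpC : Real.exp (C t) ≤ M := by
    have e1 : Real.exp (C t) = Real.sqrt (Real.exp (A₁ t) * Real.exp (A₂ t)) := by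
      show Real.exp ((A₁ t + A₂ t) / 2) = _
      rw [← Real.exp_add, Real.exp_half]
    rw [e1]
    calc Real.sqrt (Real.exp (A₁ t) * Real.exp (A₂ t)) ≤ Real.sqrt (M * M) :=
          Real.sqrt_le_sqrt (mul_le_mul hE₁ hE₂ (Real.exp_nonneg _) hM0)
      _ = M := Real.sqrt_mul_self hM0
  have hqpos : ∀ u ∈ Set.Icc (0:ℝ) t, 0 < (a₁ u + a₂ u) / 2 := by
    intro u hu
    have p1 : 0 < ‖h₁ u - (V₁ u : ℂ)‖ := norm_pos_iff.mpr (hode₁ u hu).1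
    have p2 : 0 < ‖h₂ u - (V₂ u : ℂ)‖ := norm_pos_iff.mpr (hode₂ u hu).1
    have : a₁ u = 2 / ‖h₁ u - (V₁ u : ℂ)‖ ^ 2 := rfl
    have : a₂ u = 2 / ‖h₂ u - (V₂ u : ℂ)‖ ^ 2 := rfl
    positivity
  have hCcont : ContinuousOn C (Set.Icc 0 t) := by
    intro s hs
    exact (((hA₁d s hs).continuousAt.add (hA₂d s hs).continuousAt).div_const 2).continuousWithinAt
  have main : ∀ ε' ∈ Set.Ioi ε, ‖h₁ t - h₂ t‖ ≤ ε' * (Real.exp (C t) - 1) := by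
    intro ε' hε'
    refine image_norm_le_of_norm_deriv_right_lt_deriv_boundary'
      (f := fun s => h₁ s - h₂ s)
      (f' := fun s => -2 / (h₁ s - (V₁ s : ℂ)) - -2 / (h₂ s - (V₂ s : ℂ)))
      (a := 0) (b := t)
      (B := fun s => ε' * (Real.exp (C s) - 1))
      (B' := fun s => ε' * (Real.exp (C s) * ((a₁ s + a₂ s) / 2)))
      ?_ ?_ ?_ ?_ ?_ ?_ (right_mem_Icc.2 ht.le)
    · exact fun s hs => (((hode₁ s hs).2.continuousWithinAt).sub ((hode₂ s hs).2.continuousWithinAt))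
    · intro u hu
      exact deriv_Ici_of_Icc hu.1 hu.2 (((hode₁ u ⟨hu.1, hu.2.le⟩).2).sub ((hode₂ u ⟨hu.1, hu.2.le⟩).2))
    · show ‖h₁ 0 - h₂ 0‖ ≤ ε' * (Real.exp (C 0) - 1)
      have : C 0 = 0 := by show (A₁ 0 + A₂ 0) / 2 = 0; rw [hA₁0, hA₂0]; norm_num
      rw [h₁0, h₂0, this]
      simp
    · exact continuousOn_const.mul ((Real.continuous_exp.comp_continuousOn hCcont).sub
        continuousOn_const)
    · intro u hu
      have hum : u ∈ Set.Icc (0:ℝ) t := ⟨hu.1, hu.2.le⟩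
      have hd : HasDerivAt (fun s => ε' * (Real.exp ((A₁ s + A₂ s) / 2) - 1))
          (ε' * (Real.exp ((A₁ u + A₂ u) / 2) * ((a₁ u + a₂ u) / 2))) u :=
        ((((hA₁d u hum).add (hA₂d u hum)).div_const 2).exp.sub_const 1).const_mul ε'
      exact hd.hasDerivWithinAt
    · intro u hu hDeq
      have hum : u ∈ Set.Icc (0:ℝ) t := ⟨hu.1, hu.2.le⟩
      set w₁ := h₁ u - (V₁ u : ℂ) with hw₁def
      set w₂ := h₂ u - (V₂ u : ℂ) with hw₂def
      have hw₁ : w₁ ≠ 0 := (hode₁ u hum).1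
      have hw₂ : w₂ ≠ 0 := (hode₂ u hum).1
      have p1 : 0 < ‖w₁‖ := norm_pos_iff.mpr hw₁
      have p2 : 0 < ‖w₂‖ := norm_pos_iff.mpr hw₂
      have hf'eq : -2 / w₁ - -2 / w₂ = 2 * (w₁ - w₂) / (w₁ * w₂) := by
        field_simp
        ring
      have hnorm : ‖-2 / w₁ - -2 / w₂‖ = 2 * ‖w₁ - w₂‖ /
          (‖w₁‖ * ‖w₂‖) := by
        rw [hf'eq]
        simp [norm_div, norm_mul]
      have hsub : ‖w₁ - w₂‖ ≤ ‖h₁ u - h₂ u‖ + ε := by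
        have e : w₁ - w₂ = (h₁ u - h₂ u) - ((V₁ u - V₂ u : ℝ) : ℂ) := by
          rw [hw₁def, hw₂def]
          push_cast
          ring
        rw [e]
        refine le_trans (norm_sub_le _ _) ?_
        rw [Complex.norm_real, Real.norm_eq_abs]
        exact add_le_add_right (hεle u hum) _
      have hq : 2 / (‖w₁‖ * ‖w₂‖) ≤ (a₁ u + a₂ u) / 2 := by
        have := amgm2 p1 p2
        have e1 : a₁ u = 2 / ‖w₁‖ ^ 2 := rfl
        have e2 : a₂ u = 2 / ‖w₂‖ ^ 2 := rfl
        rw [e1, e2]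
        calc 2 / (‖w₁‖ * ‖w₂‖) ≤ 1 / ‖w₁‖ ^ 2 +
              1 / ‖w₂‖ ^ 2 := this
          _ = (2 / ‖w₁‖ ^ 2 + 2 / ‖w₂‖ ^ 2) / 2 := by ring
      have step1 : ‖-2 / w₁ - -2 / w₂‖ ≤ (‖h₁ u - h₂ u‖ + ε) * ((a₁ u + a₂ u) / 2) := by
        rw [hnorm]
        have : 2 * ‖w₁ - w₂‖ / (‖w₁‖ * ‖w₂‖) =
            ‖w₁ - w₂‖ * (2 / (‖w₁‖ * ‖w₂‖)) := by
          field_simp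
        rw [this]
        exact mul_le_mul hsub hq (by positivity) (by positivity)
      refine lt_of_le_of_lt step1 ?_
      have hB : ‖h₁ u - h₂ u‖ + ε = ε' * Real.exp (C u) - ε' + ε := by
        rw [hDeq]; ring
      have hlt : ‖h₁ u - h₂ u‖ + ε < ε' * Real.exp (C u) := by
        rw [hB]
        have : ε < ε' := hε'
        linarith
      calc (‖h₁ u - h₂ u‖ + ε) * ((a₁ u + a₂ u) / 2) <
            (ε' * Real.exp (C u)) * ((a₁ u + a₂ u) / 2) :=
          mul_lt_mul_of_pos_right hlt (hqpos u hum)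
        _ = ε' * (Real.exp (C u) * ((a₁ u + a₂ u) / 2)) := by ring
  have lim : Filter.Tendsto (fun ε' => ε' * (Real.exp (C t) - 1)) (nhdsWithin ε (Set.Ioi ε))
      (nhds (ε * (Real.exp (C t) - 1))) :=
    ((continuous_id.mul continuous_const).tendsto ε).mono_left nhdsWithin_le_nhds
  have hfinal : ‖h₁ t - h₂ t‖ ≤ ε * (Real.exp (C t) - 1) :=
    ge_of_tendsto lim (eventually_nhdsWithin_of_forall main)
  calc ‖h₁ t - h₂ t‖ = ‖h₁ t - h₂ t‖ := rfl
    _ ≤ ε * (Real.exp (C t) - 1) := hfinal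
    _ ≤ ε * (M - 1) := mul_le_mul_of_nonneg_left (by linarith) hε0
end

section
/- Comparison of swallowing times of the reverse Loewner flow (Lemma 5.1): Let V¹, V² : [0,∞) → ℝ be continuous with V¹(0) = V²(0) = 0, let t > 0 and x > 0, and set δ := sup_{s∈[0,t]} |V¹(s) − V²(s)|. Suppose there exists h² : [0,t] → ℝ with h²(0) = x such that h²(s) − V²(s) > 0 and (h²)'(s) = −2/(h²(s) − V²(s)) for all s ∈ [0,t]. Then there exists h¹ : [0,t] → ℝ with h¹(0) = x + δ such that h¹(s) − V¹(s) > 0 and (h¹)'(s) = −2/(h¹(s) − V¹(s)) for all s ∈ [0,t]. Equivalently, in terms of the swallowing times T^j(y) (the first time the reverse flow started at y > 0 with driver V^j hits the driver): if T¹(x + δ) ≤ t then T²(x) ≤ t. -/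
open Set Filter Topology


open Set Filter Topology

lemma crossing_aux {a b : ℝ} (hab : a < b) {g g' : ℝ → ℝ}
    (hd : ∀ s ∈ Set.Icc a b, HasDerivWithinAt g (g' s) (Set.Icc a b) s)
    (ha : g a < 0)
    (hneg : ∀ s ∈ Set.Icc a b, g s = 0 → g' s < 0) :
    ∀ s ∈ Set.Icc a b, g s < 0 := by
  by_contra hcon
  push_neg at hcon
  obtain ⟨s₁, hs₁, hgs₁⟩ := hcon
  have hgc : ContinuousOn g (Set.Icc a b) := fun s hs => (hd s hs).continuousWithinAt
  set S := {s | s ∈ Set.Icc a b ∧ 0 ≤ g s} with hSdef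
  have hSne : S.Nonempty := ⟨s₁, hs₁, hgs₁⟩
  have hSeq : S = Set.Icc a b ∩ g ⁻¹' Set.Ici 0 := by
    ext z; simp [hSdef, Set.mem_Ici]
  have hSclosed : IsClosed S := by
    rw [hSeq]
    exact hgc.preimage_isClosed_of_isClosed isClosed_Icc isClosed_Ici
  have hSbdd : BddBelow S := ⟨a, fun z hz => hz.1.1⟩
  set s₀ := sInf S with hs₀def
  have hs₀S : s₀ ∈ S := hSclosed.csInf_mem hSne hSbdd
  have hs₀ : s₀ ∈ Set.Icc a b := hs₀S.1
  have hgs₀ : 0 ≤ g s₀ := hs₀S.2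
  have has₀ : a < s₀ := by
    rcases lt_or_eq_of_le hs₀.1 with h | h
    · exact h
    · exact absurd hgs₀ (by rw [← h]; linarith)
  have hbefore : ∀ z ∈ Set.Ico a s₀, g z < 0 := by
    intro z hz
    by_contra h
    push_neg at h
    exact absurd (csInf_le hSbdd ⟨⟨hz.1, hz.2.le.trans hs₀.2⟩, h⟩) (not_le.mpr hz.2)
  have hne : (𝓝[Set.Ico a s₀] s₀).NeBot := by
    rw [← mem_closure_iff_nhdsWithin_neBot, closure_Ico has₀.ne]
    exact ⟨has₀.le, le_rfl⟩
  -- g s₀ = 0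
  have hcw : ContinuousWithinAt g (Set.Ico a s₀) s₀ :=
    (hgc s₀ hs₀).mono (fun z hz => ⟨hz.1, hz.2.le.trans hs₀.2⟩)
  have hgle : g s₀ ≤ 0 :=
    le_of_tendsto hcw (eventually_mem_nhdsWithin.mono fun z hz => (hbefore z hz).le)
  have hg0 : g s₀ = 0 := le_antisymm hgle hgs₀
  -- derivative at s₀ from the left is ≥ 0
  have hmono : Set.Icc a s₀ ⊆ Set.Icc a b := Set.Icc_subset_Icc le_rfl hs₀.2
  have hslope : Tendsto (slope g s₀) (𝓝[Set.Icc a s₀ \ {s₀}] s₀) (𝓝 (g' s₀)) :=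
    hasDerivWithinAt_iff_tendsto_slope.mp ((hd s₀ hs₀).mono hmono)
  rw [Set.Icc_sdiff_right] at hslope
  have hge : 0 ≤ g' s₀ := by
    refine ge_of_tendsto hslope (eventually_mem_nhdsWithin.mono fun z hz => ?_)
    rw [slope_def_field]
    have h1 : g z < 0 := hbefore z hz
    have h2 : z - s₀ < 0 := by linarith [hz.2]
    rw [hg0]
    exact div_nonneg_iff.2 (Or.inr ⟨by linarith, by linarith⟩)
  exact absurd hge (not_le.mpr (hneg s₀ hs₀ hg0))

lemma lip_aux (a m : ℝ) (hm : 0 < m) :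
    LipschitzWith (Real.toNNReal (2 / (m * m))) (fun y : ℝ => -2 / max (y - a) m) := by
  apply LipschitzWith.of_dist_le_mul
  intro y z
  set Y := max (y - a) m with hYdef
  set Z := max (z - a) m with hZdef
  have hY : m ≤ Y := le_max_right _ _
  have hZ : m ≤ Z := le_max_right _ _
  have hY0 : 0 < Y := hm.trans_le hY
  have hZ0 : 0 < Z := hm.trans_le hZ
  rw [Real.dist_eq, Real.dist_eq, Real.coe_toNNReal _ (by positivity)]
  have h1 : (-2 / Y) - (-2 / Z) = 2 * (Y - Z) / (Y * Z) := by
    field_simp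
    ring
  rw [h1, abs_div, abs_mul, abs_two, abs_of_pos (by positivity : (0:ℝ) < Y * Z)]
  have h2 : |Y - Z| ≤ |y - z| := by
    calc |Y - Z| ≤ |(y - a) - (z - a)| := abs_max_sub_max_le_abs _ _ _
    _ = |y - z| := by ring_nf
  calc 2 * |Y - Z| / (Y * Z) ≤ 2 * |y - z| / (m * m) := by
        apply div_le_div₀ (by positivity) (by linarith) (by positivity)
        exact mul_le_mul hY hZ hm.le (hm.le.trans hY)
    _ = 2 / (m * m) * |y - z| := by ring



/-- **Comparison of swallowing times of the reverse Loewner flow (Lemma 5.1).**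
Let `δ = sup_{s ∈ [0,t]} |V¹ s - V² s|`. If the reverse Loewner flow with driver `V²`
started at `x > 0` survives (stays strictly above the driver) on all of `[0,t]`, then so
does the reverse flow with driver `V¹` started at `x + δ`. Equivalently, for the
swallowing times: `T¹(x + δ) ≤ t` implies `T²(x) ≤ t`. -/
theorem stmt7 (V₁ V₂ : ℝ → ℝ)
    (hV₁ : ContinuousOn V₁ (Set.Ici 0)) (hV₂ : ContinuousOn V₂ (Set.Ici 0))
    (hV₁0 : V₁ 0 = 0) (hV₂0 : V₂ 0 = 0)
    (t x : ℝ) (ht : 0 < t) (hx : 0 < x)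
    (δ : ℝ) (hδ : δ = ⨆ s : Set.Icc (0 : ℝ) t, |V₁ ↑s - V₂ ↑s|)
    (h₂ : ℝ → ℝ) (h₂0 : h₂ 0 = x)
    (hode₂ : ∀ s ∈ Set.Icc (0 : ℝ) t, 0 < h₂ s - V₂ s ∧
      HasDerivWithinAt h₂ (-2 / (h₂ s - V₂ s)) (Set.Icc 0 t) s) :
    ∃ h₁ : ℝ → ℝ, h₁ 0 = x + δ ∧ ∀ s ∈ Set.Icc (0 : ℝ) t, 0 < h₁ s - V₁ s ∧
      HasDerivWithinAt h₁ (-2 / (h₁ s - V₁ s)) (Set.Icc 0 t) s := by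
  have hsub : Set.Icc (0:ℝ) t ⊆ Set.Ici 0 := fun s hs => hs.1
  have h0mem : (0:ℝ) ∈ Set.Icc (0:ℝ) t := ⟨le_refl 0, ht.le⟩
  have hh₂c : ContinuousOn h₂ (Set.Icc 0 t) := fun s hs => ((hode₂ s hs).2).continuousWithinAt
  have hφc : ContinuousOn (fun s => h₂ s - V₂ s) (Set.Icc 0 t) := hh₂c.sub (hV₂.mono hsub)
  obtain ⟨sm, hsm, hsmin⟩ :=
    isCompact_Icc.exists_isMinOn (Set.nonempty_Icc.mpr ht.le) hφc
  set m := h₂ sm - V₂ sm with hmdef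
  have hm : 0 < m := (hode₂ sm hsm).1
  have hmφ : ∀ s ∈ Set.Icc (0:ℝ) t, m ≤ h₂ s - V₂ s := fun s hs => hsmin hs
  -- δ bounds
  have hδbd : ∀ s ∈ Set.Icc (0:ℝ) t, |V₁ s - V₂ s| ≤ δ := by
    intro s hs
    rw [hδ]
    have hbdd : BddAbove (Set.range fun s : Set.Icc (0:ℝ) t => |V₁ ↑s - V₂ ↑s|) := by
      have h1 := (isCompact_Icc (a := (0:ℝ)) (b := t)).bddAbove_image
        (((hV₁.mono hsub).sub (hV₂.mono hsub)).abs)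
      rwa [Set.image_eq_range] at h1
    exact le_ciSup hbdd ⟨s, hs⟩
  have hδ0 : 0 ≤ δ := le_trans (abs_nonneg _) (hδbd 0 h0mem)
  set Lr : ℝ := 2 / (m * m) with hLrdef
  have hLrpos : 0 < Lr := by positivity
  set v : ℝ → ℝ → ℝ := fun s y => -2 / max (y - V₁ s) m with hvdef
  have hlip : ∀ s : ℝ, LipschitzWith (Real.toNNReal Lr) (v s) := fun s => lip_aux (V₁ s) m hm
  -- Picard–Lindelöf existence for the truncated field
  have hpl : IsPicardLindelof v (tmin := 0) (tmax := t) ⟨0, h0mem⟩ (x + δ)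
      (Real.toNNReal (2 / m * t)) 0 (Real.toNNReal (2 / m)) (Real.toNNReal Lr) := by
    refine ⟨fun s _ => (hlip s).lipschitzOnWith, fun y _ => ?_,
      fun s _ y _ => ?_, ?_⟩
    · apply ContinuousOn.div continuousOn_const
      · exact (continuous_id.max continuous_const).comp_continuousOn
          (continuousOn_const.sub (hV₁.mono hsub))
      · intro s hs
        exact ne_of_gt (lt_of_lt_of_le hm (le_max_right _ _))
    · have hY : 0 < max (y - V₁ s) m := lt_of_lt_of_le hm (le_max_right _ _)
      have h1 : ‖v s y‖ = 2 / max (y - V₁ s) m := by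
        rw [hvdef]
        simp only [Real.norm_eq_abs, abs_div, abs_of_pos hY]
        norm_num
      rw [h1, Real.coe_toNNReal _ (by positivity)]
      gcongr
      exact le_max_right _ _
    · have h1 : max (t - 0) (0 - (0:ℝ)) = t := by
        rw [sub_zero, sub_zero, max_eq_left ht.le]
      show (Real.toNNReal (2 / m) : ℝ) * max (t - 0) (0 - 0) ≤ (Real.toNNReal (2 / m * t) : ℝ) - ((0 : NNReal) : ℝ)
      rw [h1, Real.coe_toNNReal _ (by positivity), Real.coe_toNNReal _ (mul_nonneg (by positivity) ht.le),
        NNReal.coe_zero, sub_zero]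
  obtain ⟨f, hf0, hfd⟩ : ∃ f : ℝ → ℝ, f 0 = x + δ ∧
      ∀ s ∈ Set.Icc (0:ℝ) t, HasDerivWithinAt f (v s (f s)) (Set.Icc 0 t) s :=
    hpl.exists_eq_forall_mem_Icc_hasDerivWithinAt₀
  -- key pointwise derivative lower bound
  have hkey : ∀ s ∈ Set.Icc (0:ℝ) t,
      -(Lr * |f s - h₂ s - δ|) - 2 / (h₂ s - V₂ s) ≤ v s (f s) := by
    intro s hs
    have hVle : V₁ s - V₂ s ≤ δ := (le_abs_self _).trans (hδbd s hs)
    have hφs : m ≤ h₂ s - V₂ s := hmφ s hs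
    have hφpos : 0 < h₂ s - V₂ s := hm.trans_le hφs
    have hmax : max (h₂ s + δ - V₁ s) m = h₂ s + δ - V₁ s := max_eq_left (by linarith)
    have h2' : v s (h₂ s + δ) = -2 / (h₂ s + δ - V₁ s) := by
      rw [hvdef]
      simp only
      rw [show h₂ s + δ - V₁ s = h₂ s + δ - V₁ s from rfl, hmax]
    have hA : -2 / (h₂ s - V₂ s) ≤ v s (h₂ s + δ) := by
      rw [h2', neg_div, neg_div, neg_le_neg_iff]
      exact div_le_div_of_nonneg_left (by norm_num) hφpos (by linarith)
    have hB : |v s (f s) - v s (h₂ s + δ)| ≤ Lr * |f s - (h₂ s + δ)| := by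
      have h3 := (hlip s).dist_le_mul (f s) (h₂ s + δ)
      rwa [Real.dist_eq, Real.dist_eq, Real.coe_toNNReal _ hLrpos.le] at h3
    have h4 := (abs_le.mp hB).1
    have habs : |f s - (h₂ s + δ)| = |f s - h₂ s - δ| := by ring_nf
    rw [habs] at h4
    have hnd : (-2 : ℝ) / (h₂ s - V₂ s) = -(2 / (h₂ s - V₂ s)) := neg_div _ _
    linarith
  -- barrier argument: for every ε > 0, δ - (f s - h₂ s) < ε exp(2 Lr s)
  have hbar : ∀ ε : ℝ, 0 < ε → ∀ s ∈ Set.Icc (0:ℝ) t,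
      δ - (f s - h₂ s) - ε * Real.exp (2 * Lr * s) < 0 := by
    intro ε hε
    apply crossing_aux ht
      (g' := fun s => -(v s (f s)) + (-2 / (h₂ s - V₂ s)) - ε * (Real.exp (2 * Lr * s) * (2 * Lr)))
    · intro s hs
      have he : HasDerivAt (fun r : ℝ => ε * Real.exp (2 * Lr * r))
          (ε * (Real.exp (2 * Lr * s) * (2 * Lr))) s := by
        have h1 : HasDerivAt (fun r : ℝ => 2 * Lr * r) (2 * Lr) s := by
          simpa using (hasDerivAt_id s).const_mul (2 * Lr)
        simpa using h1.exp.const_mul ε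
      have hd1 := (((hfd s hs).sub (hode₂ s hs).2).const_sub δ).sub he.hasDerivWithinAt
      refine hd1.congr_deriv ?_
      ring
    · rw [hf0, h₂0, mul_zero, Real.exp_zero]
      linarith
    · intro s hs hg0
      have hBpos : 0 < ε * Real.exp (2 * Lr * s) := by positivity
      have habs : |f s - h₂ s - δ| = ε * Real.exp (2 * Lr * s) := by
        rw [abs_of_nonpos (by linarith)]
        linarith
      have hk := hkey s hs
      rw [habs] at hk
      have h2lb : ε * (Real.exp (2 * Lr * s) * (2 * Lr)) = 2 * (Lr * (ε * Real.exp (2 * Lr * s))) := by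
        ring
      have h3 : Lr * (ε * Real.exp (2 * Lr * s)) = Lr * (ε * Real.exp (2 * Lr * s)) := rfl
      have hpos := mul_pos hLrpos hBpos
      have hnd : (-2 : ℝ) / (h₂ s - V₂ s) = -(2 / (h₂ s - V₂ s)) := neg_div _ _
      linarith
  -- pass to the limit ε → 0
  have hfinal : ∀ s ∈ Set.Icc (0:ℝ) t, δ ≤ f s - h₂ s := by
    intro s hs
    by_contra hcon
    push_neg at hcon
    set c := δ - (f s - h₂ s) with hcdef
    have hc : 0 < c := by linarith
    set ε := c / (2 * Real.exp (2 * Lr * t)) with hεdef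
    have hεpos : 0 < ε := by positivity
    have h1 := hbar ε hεpos s hs
    have hE : Real.exp (2 * Lr * s) ≤ Real.exp (2 * Lr * t) := by
      apply Real.exp_le_exp.mpr
      have := hs.2
      nlinarith
    have h2 : ε * Real.exp (2 * Lr * s) ≤ c / 2 := by
      rw [hεdef]
      calc c / (2 * Real.exp (2 * Lr * t)) * Real.exp (2 * Lr * s)
          ≤ c / (2 * Real.exp (2 * Lr * t)) * Real.exp (2 * Lr * t) :=
            mul_le_mul_of_nonneg_left hE (by positivity)
        _ = c / 2 := by
            field_simp
    linarith
  -- conclusion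
  refine ⟨f, hf0, fun s hs => ?_⟩
  have hVle : V₁ s - V₂ s ≤ δ := (le_abs_self _).trans (hδbd s hs)
  have hφs : m ≤ h₂ s - V₂ s := hmφ s hs
  have hge : h₂ s - V₂ s ≤ f s - V₁ s := by
    have := hfinal s hs
    linarith
  have hpos : 0 < f s - V₁ s := lt_of_lt_of_le (hm.trans_le hφs) hge
  refine ⟨hpos, ?_⟩
  have hmax : max (f s - V₁ s) m = f s - V₁ s := max_eq_left (le_trans hφs hge)
  have hder := hfd s hs
  rw [hvdef] at hder
  simp only at hder
  rwa [hmax] at hder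
end

section
/- Pathwise comparison of two reverse Loewner flows (claim in the proof of Lemma 5.1): Let t' > 0, let V¹, V² : [0,t'] → ℝ be continuous with V¹(0) = V²(0) = 0, let x > 0 and let δ > 0 satisfy sup_{s∈[0,t']} |V¹(s) − V²(s)| ≤ δ. Suppose h¹, h² : [0,t'] → ℝ satisfy h¹(0) = x + δ, h²(0) = x, and for j = 1,2 and all s ∈ [0,t']: h^j(s) − V^j(s) > 0 and (h^j)'(s) = −2/(h^j(s) − V^j(s)). Then for all s ∈ [0,t']: h²(s) − V²(s) < h¹(s) − V¹(s), and consequently (h²)'(s) < (h¹)'(s). -/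
/-- Key algebraic inequality: if `m ≤ a`, `m ≤ b`, `f ≤ 0`, `f ≤ a - b`, then
`(2/(m*m)) * f ≤ -2/a - (-2/b)`. -/
lemma stmt8_key_ineq (a b f m : ℝ) (hm : 0 < m) (ha : m ≤ a) (hb : m ≤ b)
    (hf0 : f ≤ 0) (hfab : f ≤ a - b) : 2 / (m * m) * f ≤ -2 / a - -2 / b := by
  have ha0 : 0 < a := hm.trans_le ha
  have hb0 : 0 < b := hm.trans_le hb
  have h1 : -2 / a - -2 / b = 2 * (a - b) / (a * b) := by
    field_simp
    ring
  rw [h1, div_mul_eq_mul_div, div_le_div_iff₀ (by positivity) (by positivity)]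
  nlinarith [mul_nonneg (mul_nonneg (neg_nonneg.2 hf0) (sub_nonneg.2 ha)) hb0.le,
    mul_nonneg (neg_nonneg.2 hf0) (mul_nonneg (sub_nonneg.2 hb) hm.le),
    mul_nonneg (sub_nonneg.2 (mul_le_mul ha hb hm.le ha0.le)) (sub_nonneg.2 hfab)]

/-- **Pathwise comparison of two reverse Loewner flows (claim in the proof of Lemma 5.1).**
If `h¹` solves the reverse Loewner equation with driver `V¹` started at `x + δ`, and `h²`
solves it with driver `V²` started at `x`, where `sup_{[0,t']} |V¹ - V²| ≤ δ`, then
`h² s - V² s < h¹ s - V¹ s` and consequently `(h²)'(s) < (h¹)'(s)` on `[0,t']`. -/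
theorem stmt8 (t' : ℝ) (ht' : 0 < t') (V₁ V₂ : ℝ → ℝ)
    (hV₁ : ContinuousOn V₁ (Set.Icc 0 t')) (hV₂ : ContinuousOn V₂ (Set.Icc 0 t'))
    (hV₁0 : V₁ 0 = 0) (hV₂0 : V₂ 0 = 0)
    (x δ : ℝ) (hx : 0 < x) (hδ : 0 < δ)
    (hdist : ∀ s ∈ Set.Icc (0 : ℝ) t', |V₁ s - V₂ s| ≤ δ)
    (h₁ h₂ : ℝ → ℝ) (h₁0 : h₁ 0 = x + δ) (h₂0 : h₂ 0 = x)
    (hode₁ : ∀ s ∈ Set.Icc (0 : ℝ) t', 0 < h₁ s - V₁ s ∧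
      HasDerivWithinAt h₁ (-2 / (h₁ s - V₁ s)) (Set.Icc 0 t') s)
    (hode₂ : ∀ s ∈ Set.Icc (0 : ℝ) t', 0 < h₂ s - V₂ s ∧
      HasDerivWithinAt h₂ (-2 / (h₂ s - V₂ s)) (Set.Icc 0 t') s) :
    ∀ s ∈ Set.Icc (0 : ℝ) t',
      h₂ s - V₂ s < h₁ s - V₁ s ∧ -2 / (h₂ s - V₂ s) < -2 / (h₁ s - V₁ s) := by
  have h0I : (0 : ℝ) ∈ Set.Icc (0 : ℝ) t' := ⟨le_rfl, ht'.le⟩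
  have hIne : (Set.Icc (0 : ℝ) t').Nonempty := ⟨0, h0I⟩
  -- continuity
  have hcont₁ : ContinuousOn h₁ (Set.Icc 0 t') := fun s hs =>
    ((hode₁ s hs).2).continuousWithinAt
  have hcont₂ : ContinuousOn h₂ (Set.Icc 0 t') := fun s hs =>
    ((hode₂ s hs).2).continuousWithinAt
  have hD₁c : ContinuousOn (fun s => h₁ s - V₁ s) (Set.Icc 0 t') := hcont₁.sub hV₁
  have hD₂c : ContinuousOn (fun s => h₂ s - V₂ s) (Set.Icc 0 t') := hcont₂.sub hV₂
  -- uniform lower bound on the compact interval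
  obtain ⟨z₁, hz₁I, hz₁⟩ := isCompact_Icc.exists_isMinOn hIne hD₁c
  obtain ⟨z₂, hz₂I, hz₂⟩ := isCompact_Icc.exists_isMinOn hIne hD₂c
  set m : ℝ := min (h₁ z₁ - V₁ z₁) (h₂ z₂ - V₂ z₂) with hmdef
  have hm0 : 0 < m := lt_min (hode₁ z₁ hz₁I).1 (hode₂ z₂ hz₂I).1
  have hmD₁ : ∀ s ∈ Set.Icc (0 : ℝ) t', m ≤ h₁ s - V₁ s := fun s hs =>
    le_trans (min_le_left _ _) (hz₁ hs)
  have hmD₂ : ∀ s ∈ Set.Icc (0 : ℝ) t', m ≤ h₂ s - V₂ s := fun s hs =>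
    le_trans (min_le_right _ _) (hz₂ hs)
  set C : ℝ := 2 / (m * m) with hCdef
  -- define F and its derivative
  set F : ℝ → ℝ := fun s => h₁ s - h₂ s - δ with hFdef
  set d : ℝ → ℝ := fun s => -2 / (h₁ s - V₁ s) - -2 / (h₂ s - V₂ s) with hddef
  have hFd : ∀ s ∈ Set.Icc (0 : ℝ) t', HasDerivWithinAt F (d s) (Set.Icc 0 t') s :=
    fun s hs => ((hode₁ s hs).2.sub (hode₂ s hs).2).sub_const δ
  have hFc : ContinuousOn F (Set.Icc 0 t') := (hcont₁.sub hcont₂).sub continuousOn_const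
  have hF0eq : F 0 = 0 := by simp [hFdef, h₁0, h₂0]
  have hΔV : ∀ s ∈ Set.Icc (0 : ℝ) t', V₁ s - V₂ s ≤ δ := fun s hs =>
    (abs_le.1 (hdist s hs)).2
  -- key derivative inequality at points where F ≤ 0
  have hkey : ∀ s ∈ Set.Icc (0 : ℝ) t', F s ≤ 0 → C * F s ≤ d s := by
    intro s hs hFs
    have : F s ≤ (h₁ s - V₁ s) - (h₂ s - V₂ s) := by
      have := hΔV s hs
      simp only [hFdef]
      linarith
    exact stmt8_key_ineq _ _ _ _ hm0 (hmD₁ s hs) (hmD₂ s hs) hFs this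
  -- derivative of F at interior points
  have hFd' : ∀ s ∈ Set.Ioo (0 : ℝ) t', HasDerivAt F (d s) s := by
    intro s hs
    exact (hFd s (Set.Ioo_subset_Icc_self hs)).hasDerivAt
      (Icc_mem_nhds hs.1 hs.2)
  -- Step A: F ≥ 0 on [0, t']
  have hFnonneg : ∀ s ∈ Set.Icc (0 : ℝ) t', 0 ≤ F s := by
    by_contra hcon
    push_neg at hcon
    obtain ⟨s₀, hs₀I, hs₀⟩ := hcon
    set S : Set ℝ := Set.Icc 0 s₀ ∩ F ⁻¹' Set.Ici 0 with hSdef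
    have h0S : (0 : ℝ) ∈ S := ⟨⟨le_rfl, hs₀I.1⟩, by simp [hF0eq]⟩
    have hSne : S.Nonempty := ⟨0, h0S⟩
    have hSbdd : BddAbove S := ⟨s₀, fun u hu => hu.1.2⟩
    set τ : ℝ := sSup S with hτdef
    have hSclosed : IsClosed S :=
      (hFc.mono (Set.Icc_subset_Icc le_rfl hs₀I.2)).preimage_isClosed_of_isClosed
        isClosed_Icc isClosed_Ici
    have hτS : τ ∈ S := hSclosed.closure_subset (csSup_mem_closure hSne hSbdd)
    have hτ0 : 0 ≤ τ := hτS.1.1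
    have hτs₀ : τ ≤ s₀ := hτS.1.2
    have hFτ : 0 ≤ F τ := hτS.2
    have hτlt : τ < s₀ := lt_of_le_of_ne hτs₀ (by
      intro h; rw [h] at hFτ; linarith)
    -- F < 0 on (τ, s₀]
    have hFneg : ∀ u ∈ Set.Ioc τ s₀, F u < 0 := by
      intro u hu
      by_contra hge
      push_neg at hge
      have : u ∈ S := ⟨⟨hτ0.trans hu.1.le, hu.2⟩, hge⟩
      exact absurd (le_csSup hSbdd this) (not_le.2 hu.1)
    -- consider G = F * exp(-(C s))
    set G : ℝ → ℝ := fun s => F s * Real.exp (-(C * s)) with hGdef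
    have hGder : ∀ s ∈ Set.Ioo τ s₀, HasDerivAt G
        (d s * Real.exp (-(C * s)) + F s * (Real.exp (-(C * s)) * -C)) s := by
      intro s hs
      have hsI : s ∈ Set.Ioo (0 : ℝ) t' :=
        ⟨lt_of_le_of_lt hτ0 hs.1, lt_of_lt_of_le hs.2 hs₀I.2⟩
      have hlin : HasDerivAt (fun u : ℝ => -(C * u)) (-C) s := by
        simpa [Pi.neg_def] using ((hasDerivAt_id s).const_mul C).neg
      exact (hFd' s hsI).mul hlin.exp
    have hGmono : MonotoneOn G (Set.Icc τ s₀) := by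
      apply monotoneOn_of_deriv_nonneg (convex_Icc τ s₀)
      · exact ((hFc.mono (Set.Icc_subset_Icc hτ0 hs₀I.2)).mul
          (Real.continuous_exp.comp (continuous_const.mul continuous_id).neg).continuousOn)
      · intro s hs
        rw [interior_Icc] at hs
        exact (hGder s hs).differentiableAt.differentiableWithinAt
      · intro s hs
        rw [interior_Icc] at hs
        rw [(hGder s hs).deriv]
        have hsI : s ∈ Set.Icc (0 : ℝ) t' :=
          ⟨hτ0.trans hs.1.le, hs.2.le.trans hs₀I.2⟩
        have hFs : F s < 0 := hFneg s ⟨hs.1, hs.2.le⟩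
        have hk := hkey s hsI hFs.le
        have hexp : (0 : ℝ) < Real.exp (-(C * s)) := Real.exp_pos _
        nlinarith
    have h1 : G τ ≤ G s₀ := hGmono ⟨le_rfl, hτs₀⟩ ⟨hτs₀, le_rfl⟩ hτs₀
    have h2 : 0 ≤ G τ := mul_nonneg hFτ (Real.exp_pos _).le
    have h3 : G s₀ < 0 :=
      mul_neg_of_neg_of_pos hs₀ (Real.exp_pos _)
    linarith
  -- consequences: D₂ ≤ D₁ and d ≥ 0 everywhere
  have hD₂leD₁ : ∀ s ∈ Set.Icc (0 : ℝ) t', h₂ s - V₂ s ≤ h₁ s - V₁ s := by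
    intro s hs
    have h1 := hFnonneg s hs
    have h2 := hΔV s hs
    simp only [hFdef] at h1
    linarith
  have hdnonneg : ∀ s ∈ Set.Icc (0 : ℝ) t', 0 ≤ d s := by
    intro s hs
    have h1 : 2 / (h₁ s - V₁ s) ≤ 2 / (h₂ s - V₂ s) :=
      div_le_div_of_nonneg_left (by norm_num) (hode₂ s hs).1 (hD₂leD₁ s hs)
    have : d s = 2 / (h₂ s - V₂ s) - 2 / (h₁ s - V₁ s) := by
      simp only [hddef, neg_div]
      ring
    linarith [this ▸ sub_nonneg.2 h1]
  -- F is monotone on [0, t']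
  have hFmono : MonotoneOn F (Set.Icc 0 t') := by
    apply monotoneOn_of_deriv_nonneg (convex_Icc 0 t') hFc
    · intro s hs
      rw [interior_Icc] at hs
      exact (hFd' s hs).differentiableAt.differentiableWithinAt
    · intro s hs
      rw [interior_Icc] at hs
      rw [(hFd' s hs).deriv]
      exact hdnonneg s (Set.Ioo_subset_Icc_self hs)
  -- Step B: strict inequality
  intro s hs
  have hmain : h₂ s - V₂ s < h₁ s - V₁ s := by
    rcases lt_or_eq_of_le (hD₂leD₁ s hs) with h | heq
    · exact h
    · exfalso
      -- equality forces F s = 0 and V₁ s - V₂ s = δ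
      have hFs0 : F s = 0 := by
        have h1 := hFnonneg s hs
        have h2 := hΔV s hs
        simp only [hFdef] at h1 ⊢
        linarith
      have hΔVs : V₁ s - V₂ s = δ := by
        simp only [hFdef] at hFs0
        linarith
      have hspos : 0 < s := by
        rcases lt_or_eq_of_le hs.1 with h | h
        · exact h
        · exfalso; rw [← h, hV₁0, hV₂0] at hΔVs; linarith
      -- F vanishes identically on [0, s]
      have hFzero : ∀ u ∈ Set.Icc (0 : ℝ) s, F u = 0 := by
        intro u hu
        have huI : u ∈ Set.Icc (0 : ℝ) t' := ⟨hu.1, hu.2.trans hs.2⟩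
        have h1 : F u ≤ F s := hFmono huI hs hu.2
        have h2 : 0 ≤ F u := hFnonneg u huI
        linarith
      -- so its derivative within [0, s] at 0 is both d 0 and 0
      have hder1 : HasDerivWithinAt F (d 0) (Set.Icc 0 s) 0 :=
        (hFd 0 h0I).mono (Set.Icc_subset_Icc le_rfl hs.2)
      have hder2 : HasDerivWithinAt F 0 (Set.Icc 0 s) 0 :=
        (hasDerivWithinAt_const 0 (Set.Icc 0 s) (0 : ℝ)).congr
          (fun u hu => hFzero u hu) hF0eq
      have hud : UniqueDiffWithinAt ℝ (Set.Icc (0 : ℝ) s) 0 :=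
        uniqueDiffOn_Icc hspos 0 ⟨le_rfl, hspos.le⟩
      have heq0 : d 0 = 0 := hud.eq_deriv _ hder1 hder2
      -- but d 0 > 0
      have hd0 : 0 < d 0 := by
        have h1 : 2 / (x + δ) < 2 / x :=
          div_lt_div_of_pos_left (by norm_num) hx (lt_add_of_pos_right x hδ)
        have : d 0 = 2 / x - 2 / (x + δ) := by
          simp only [hddef, h₁0, h₂0, hV₁0, hV₂0, sub_zero, neg_div]
          ring
        rw [this]
        linarith
      rw [heq0] at hd0
      exact lt_irrefl 0 hd0
  refine ⟨hmain, ?_⟩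
  have h1 : 2 / (h₁ s - V₁ s) < 2 / (h₂ s - V₂ s) :=
    div_lt_div_of_pos_left (by norm_num) (hode₂ s hs).1 hmain
  rw [neg_div, neg_div]
  linarith
end

section
/- Uniform swallowing of an interval for perturbations of subcritical Hölder drivers (Corollary 5.2): For every M ∈ (0,4) there exists a constant c > 0 such that the following holds. Let T > 0 and let V : [0,T] → ℝ satisfy V(0) = 0 and |V(s) − V(r)| ≤ M√|s − r| for all r, s ∈ [0,T]. Let t ∈ (0,T], let W : [0,T] → ℝ be continuous with W(0) = 0 and sup_{s∈[0,t]} |W(s) − V(s)| ≤ c√t, and let x ∈ ℝ with 0 < |x| ≤ c√t. Then there is no function h : [0,t] → ℝ with h(0) = x such that h(s) − W(s) ≠ 0 and h'(s) = −2/(h(s) − W(s)) for all s ∈ [0,t]; that is, the reverse Loewner flow with driver W started at x is swallowed by time t (T^W(x) ≤ t). -/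
open Set

noncomputable def swRho (M : ℝ) : ℝ := (M+4)/8
noncomputable def swCp (M : ℝ) : ℝ := (4-M)/8
noncomputable def swDel (M : ℝ) : ℝ := (1 - swRho M) * swCp M
noncomputable def swN (M : ℝ) : ℕ := ⌈(M + 2*swCp M)/swDel M⌉₊ + 1
noncomputable def swC (M : ℝ) : ℝ := swCp M * (swRho M)^(swN M)

lemma swQuad (M Z : ℝ) (hM0 : 0 < M) (hM4 : M < 4) (hZ : 0 ≤ Z) :
    0 ≤ Z^2 - (M + (4-M)/8*(1+(M+4)/8))*Z + 2*((M+4)/8)*(1+(M+4)/8) := by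
  have hcube : 0 ≤ M^3-108*M^2+2096*M+5568 := by
    nlinarith [sq_nonneg M, mul_nonneg (mul_nonneg hM0.le hM0.le) hM0.le]
  have hq : 0 ≤ (4-M)*(M^3-108*M^2+2096*M+5568) := mul_nonneg (by linarith) hcube
  have key : Z^2 - (M + (4-M)/8*(1+(M+4)/8))*Z + 2*((M+4)/8)*(1+(M+4)/8)
      = ((2*Z - (M + (4-M)/8*(1+(M+4)/8)))^2)/4
        + ((4-M)*(M^3-108*M^2+2096*M+5568))/16384 := by ring
  rw [key]; positivity

lemma swStep (M y Z : ℝ) (hM0 : 0 < M) (hM4 : M < 4)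
    (hZ : Z = (M+4)/8*y + M + (4-M)/8) (hZp : 0 < Z) :
    (M+4)/8*y - 2*(1-((M+4)/8)^2)/Z ≤ y - (1-(M+4)/8)*((4-M)/8) := by
  have hρ : (0:ℝ) < (M+4)/8 := by linarith
  have hq := swQuad M Z hM0 hM4 hZp.le
  have h1 : (M+4)/8*(((M+4)/8*y - y + (1-(M+4)/8)*((4-M)/8))*Z)
      ≤ (M+4)/8*(2*(1-((M+4)/8)^2)) := by
    have idt : (M+4)/8*(2*(1-((M+4)/8)^2)) - (M+4)/8*(((M+4)/8*y - y + (1-(M+4)/8)*((4-M)/8))*Z)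
        = (1-(M+4)/8)*(Z^2 - (M + (4-M)/8*(1+(M+4)/8))*Z + 2*((M+4)/8)*(1+(M+4)/8)) := by
      linear_combination (-(1-(M+4)/8)*Z) * hZ
    nlinarith [mul_nonneg (by linarith : (0:ℝ) ≤ 1-(M+4)/8) hq]
  have h2 : ((M+4)/8*y - y + (1-(M+4)/8)*((4-M)/8))*Z ≤ 2*(1-((M+4)/8)^2) :=
    le_of_mul_le_mul_left h1 hρ
  have h3 : (M+4)/8*y - y + (1-(M+4)/8)*((4-M)/8) ≤ 2*(1-((M+4)/8)^2)/Z := by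
    rw [le_div_iff₀ hZp]; exact h2
  linarith

lemma swMVT {f f' : ℝ → ℝ} {a b C : ℝ} (hab : a ≤ b)
    (hd : ∀ u ∈ Icc a b, HasDerivWithinAt f (f' u) (Icc a b) u)
    (hC : ∀ u ∈ Icc a b, f' u ≤ C) : f b - f a ≤ C * (b - a) := by
  have hcont : ContinuousOn f (Icc a b) := fun u hu => (hd u hu).continuousWithinAt
  have hanti : AntitoneOn (fun u => f u - C * u) (Icc a b) := by
    apply antitoneOn_of_hasDerivWithinAt_nonpos (convex_Icc a b)
      (hcont.sub ((continuous_const.mul continuous_id).continuousOn)) (f' := fun u => f' u - C)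
    · intro u hu
      rw [interior_Icc] at hu
      exact (((hd u (Ioo_subset_Icc_self hu)).mono
        (by rw [interior_Icc]; exact Ioo_subset_Icc_self)).sub
        (by have hc := (hasDerivWithinAt_id u (interior (Icc a b))).const_mul C; rw [mul_one] at hc; exact hc))
    · intro u hu
      rw [interior_Icc] at hu
      have := hC u (Ioo_subset_Icc_self hu); linarith
  have := hanti (left_mem_Icc.2 hab) (right_mem_Icc.2 hab) hab
  simp only at this
  linarith

set_option maxHeartbeats 1000000 in
lemma sw_aux (M : ℝ) (hM0 : 0 < M) (hM4 : M < 4)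
    (T : ℝ) (hT : 0 < T) (V : ℝ → ℝ) (hV0 : V 0 = 0)
    (hVH : ∀ r ∈ Set.Icc (0:ℝ) T, ∀ s ∈ Set.Icc (0:ℝ) T, |V s - V r| ≤ M * Real.sqrt |s - r|)
    (t : ℝ) (ht : t ∈ Set.Ioc (0:ℝ) T) (W : ℝ → ℝ) (hWc : ContinuousOn W (Set.Icc 0 T))
    (hW0 : W 0 = 0)
    (hWV : ∀ s ∈ Set.Icc (0:ℝ) t, |W s - V s| ≤ swC M * Real.sqrt t)
    (x : ℝ) (hx : 0 < x) (hxle : x ≤ swC M * Real.sqrt t)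
    (h : ℝ → ℝ) (hh0 : h 0 = x)
    (hode : ∀ s ∈ Set.Icc (0:ℝ) t, h s - W s ≠ 0 ∧
      HasDerivWithinAt h (-2 / (h s - W s)) (Set.Icc 0 t) s) : False := by
  obtain ⟨ht0, htT⟩ := ht
  set ρ : ℝ := (M+4)/8 with hρdef
  set q : ℝ := (4-M)/8 with hqdef
  set δ : ℝ := (1-ρ)*q with hδdef
  set N : ℕ := swN M with hNdef
  have hswC : swC M = q * ρ^N := rfl
  have hρ0 : (0:ℝ) < ρ := by rw [hρdef]; linarith
  have hρ1 : ρ < 1 := by rw [hρdef]; linarith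
  have hq0 : (0:ℝ) < q := by rw [hqdef]; linarith
  have hδ0 : (0:ℝ) < δ := mul_pos (by linarith) hq0
  have hst : (0:ℝ) < Real.sqrt t := Real.sqrt_pos.2 ht0
  have hcq : swC M ≤ q := by
    rw [hswC]
    calc q * ρ^N ≤ q * 1 := by
          exact mul_le_mul_of_nonneg_left (pow_le_one₀ hρ0.le hρ1.le) hq0.le
      _ = q := mul_one q
  have hNδ : M + 2*q < N * δ := by
    have h1 : (M + 2*q)/δ ≤ (⌈(M + 2*q)/δ⌉₊ : ℝ) := Nat.le_ceil _
    have h2 : M + 2*q ≤ (⌈(M + 2*q)/δ⌉₊ : ℝ) * δ := by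
      rw [← div_le_iff₀ hδ0]; exact h1
    have h3 : (N:ℝ) = (⌈(M + 2*q)/δ⌉₊ : ℝ) + 1 := by
      rw [hNdef]; unfold swN
      have : swDel M = δ := by rw [hδdef, hρdef, hqdef]; unfold swDel swRho swCp; ring
      have h4 : swCp M = q := rfl
      rw [this, h4]; push_cast; ring
    rw [h3]; nlinarith
  have hIccsub : Icc (0:ℝ) t ⊆ Icc (0:ℝ) T := Icc_subset_Icc le_rfl htT
  have hhc : ContinuousOn h (Icc 0 t) := fun u hu => ((hode u hu).2).continuousWithinAt
  have hgc : ContinuousOn (fun u => h u - W u) (Icc 0 t) := hhc.sub (hWc.mono hIccsub)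
  have hgpos : ∀ u ∈ Icc (0:ℝ) t, 0 < h u - W u := by
    intro u hu
    rcases lt_or_ge 0 (h u - W u) with hp | hn
    · exact hp
    have hne := (hode u hu).1
    have hn' : h u - W u < 0 := lt_of_le_of_ne hn hne
    have h00 : h 0 - W 0 = x := by rw [hh0, hW0, sub_zero]
    have hsub : Icc (0:ℝ) u ⊆ Icc 0 t := Icc_subset_Icc le_rfl hu.2
    have hmem : (0:ℝ) ∈ Icc (h u - W u) (h 0 - W 0) := by
      rw [h00]; exact ⟨hn'.le, hx.le⟩
    obtain ⟨v, hv, hv0⟩ := intermediate_value_Icc' hu.1 (hgc.mono hsub) hmem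
    exact absurd hv0 (hode v (hsub hv)).1
  have hmono : ∀ a ∈ Icc (0:ℝ) t, ∀ b ∈ Icc (0:ℝ) t, a ≤ b → h b ≤ h a := by
    intro a ha b hb hab
    have hsub : Icc a b ⊆ Icc 0 t := Icc_subset_Icc ha.1 hb.2
    have hm := swMVT (f := h) (f' := fun u => -2/(h u - W u)) (C := 0) hab
      (fun u hu => ((hode u (hsub hu)).2).mono hsub)
      (fun u hu => by
        have hg := hgpos u (hsub hu)
        have : -2/(h u - W u) < 0 := div_neg_of_neg_of_pos (by norm_num) hg
        linarith)
    linarith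
  have hgb : ∀ u ∈ Icc (0:ℝ) t, h u - W u ≤ h u + M * Real.sqrt u + swC M * Real.sqrt t := by
    intro u hu
    have hVu : |V u| ≤ M * Real.sqrt u := by
      have h0T : (0:ℝ) ∈ Icc (0:ℝ) T := left_mem_Icc.2 hT.le
      have hh := hVH 0 h0T u (hIccsub hu)
      rw [hV0, sub_zero, sub_zero, abs_of_nonneg hu.1] at hh
      exact hh
    have hWV' := hWV u hu
    have hWa : |W u| ≤ M * Real.sqrt u + swC M * Real.sqrt t := by
      calc |W u| = |(W u - V u) + V u| := by ring_nf
        _ ≤ |W u - V u| + |V u| := abs_add_le _ _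
        _ ≤ swC M * Real.sqrt t + M * Real.sqrt u := add_le_add hWV' hVu
        _ = _ := by ring
    have := neg_abs_le (W u)
    linarith
  set s : ℕ → ℝ := fun k => ρ^(2*(N-k)) * t with hsdef
  have hsmem : ∀ k, s k ∈ Icc (0:ℝ) t := by
    intro k
    constructor
    · exact mul_nonneg (pow_nonneg hρ0.le _) ht0.le
    · calc ρ^(2*(N-k))*t ≤ 1*t :=
          mul_le_mul_of_nonneg_right (pow_le_one₀ hρ0.le hρ1.le) ht0.le
        _ = t := one_mul t
  have hsqrt : ∀ k, Real.sqrt (s k) = ρ^(N-k) * Real.sqrt t := by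
    intro k
    rw [hsdef]
    simp only
    rw [mul_comm 2 (N-k), pow_mul, Real.sqrt_mul (sq_nonneg _),
      Real.sqrt_sq (pow_nonneg hρ0.le _)]
  clear_value ρ q δ N s
  have main : ∀ k, k ≤ N → h (s k) ≤ (q - k*δ) * (ρ^(N-k) * Real.sqrt t) := by
    intro k
    induction k with
    | zero =>
      intro _
      have h1 : h (s 0) ≤ h 0 := hmono 0 ⟨le_rfl, ht0.le⟩ (s 0) (hsmem 0) (hsmem 0).1
      have h2 : h (s 0) ≤ q * ρ^N * Real.sqrt t := by
        rw [hh0] at h1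
        calc h (s 0) ≤ x := h1
          _ ≤ swC M * Real.sqrt t := hxle
          _ = q * ρ^N * Real.sqrt t := by rw [hswC]
      have he : (q - (0:ℕ)*δ) * (ρ^(N-0)*Real.sqrt t) = q * ρ^N * Real.sqrt t := by
        push_cast; rw [Nat.sub_zero]; ring
      rw [he]; exact h2
    | succ k IH =>
      intro hk1
      have hkN : k ≤ N := Nat.le_of_succ_le hk1
      have IH' := IH hkN
      have hj : N - k = (N-(k+1)) + 1 := by omega
      set S : ℝ := ρ^(N-(k+1)) * Real.sqrt t with hSdef
      clear_value S
      have hS0 : 0 < S := by rw [hSdef]; exact mul_pos (pow_pos hρ0 _) hst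
      have hρS : ρ^(N-k) * Real.sqrt t = ρ * S := by rw [hj, pow_succ, hSdef]; ring
      have hskk1 : s k ≤ s (k+1) := by
        rw [hsdef]; simp only
        exact mul_le_mul_of_nonneg_right
          (pow_le_pow_of_le_one hρ0.le hρ1.le (by omega)) ht0.le
      have hsub2 : Icc (s k) (s (k+1)) ⊆ Icc (0:ℝ) t :=
        Icc_subset_Icc (hsmem k).1 (hsmem (k+1)).2
      set y : ℝ := q - k*δ with hydef
      clear_value y
      set Z : ℝ := ρ*y + M + q with hZdef
      clear_value Z
      have hZS : ∀ u ∈ Icc (s k) (s (k+1)), h u - W u ≤ Z * S := by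
        intro u hu
        have hu' : u ∈ Icc (0:ℝ) t := hsub2 hu
        have h1 : h u ≤ h (s k) := hmono (s k) (hsmem k) u hu' hu.1
        have h2 : Real.sqrt u ≤ Real.sqrt (s (k+1)) := Real.sqrt_le_sqrt hu.2
        have h3 : Real.sqrt (s (k+1)) = S := (hsqrt (k+1)).trans hSdef.symm
        have h4 : ρ^N * Real.sqrt t ≤ S := by
          rw [hSdef]
          exact mul_le_mul_of_nonneg_right
            (pow_le_pow_of_le_one hρ0.le hρ1.le (by omega)) hst.le
        have h5 : h (s k) ≤ y * (ρ * S) := by rw [← hρS]; exact IH'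
        have h6 : M * Real.sqrt u ≤ M * S := by
          rw [← h3]; exact mul_le_mul_of_nonneg_left h2 hM0.le
        have h7 : swC M * Real.sqrt t ≤ q * S := by
          rw [hswC, mul_assoc]
          exact mul_le_mul_of_nonneg_left h4 hq0.le
        have h9 := hgb u hu'
        have h10 : (ρ*y+M+q)*S = y*(ρ*S)+M*S+q*S := by ring
        rw [hZdef, h10]; linarith
      rcases le_or_gt Z 0 with hZ0 | hZ0
      · exfalso
        have h5 := hZS (s (k+1)) (right_mem_Icc.2 hskk1)
        have h6 := hgpos (s (k+1)) (hsmem (k+1))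
        nlinarith
      · have hZS0 : 0 < Z * S := mul_pos hZ0 hS0
        have hderiv : ∀ u ∈ Icc (s k) (s (k+1)), -2/(h u - W u) ≤ -(2/(Z*S)) := by
          intro u hu
          have hg := hgpos u (hsub2 hu)
          have h7 : 2/(Z*S) ≤ 2/(h u - W u) := by
            rw [div_le_div_iff₀ hZS0 hg]
            linarith [hZS u hu]
          rw [neg_div]
          linarith
        have hmvt := swMVT hskk1
          (fun u hu => ((hode u (hsub2 hu)).2).mono hsub2) hderiv
        have hdiff : s (k+1) - s k = (1 - ρ^2) * S^2 := by
          have hS2 : S^2 = ρ^(2*(N-(k+1))) * t := by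
            rw [hSdef, mul_pow, Real.sq_sqrt ht0.le, ← pow_mul, mul_comm (N-(k+1)) 2]
          rw [hsdef]; simp only
          rw [hS2, show 2*(N-k) = 2*(N-(k+1)) + 2 by omega, pow_add]
          ring
        have hfrac : -(2/(Z*S)) * ((1-ρ^2)*S^2) = (-(2*(1-ρ^2)/Z)) * S := by
          have hSne : S ≠ 0 := hS0.ne'
          have hZne : Z ≠ 0 := hZ0.ne'
          field_simp
        rw [hdiff, hfrac] at hmvt
        have h5 : h (s k) ≤ y * (ρ * S) := by rw [← hρS]; exact IH'
        have h8 : h (s (k+1)) ≤ (ρ*y - 2*(1-ρ^2)/Z) * S := by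
          have hid : (ρ*y - 2*(1-ρ^2)/Z)*S = y*(ρ*S) + (-(2*(1-ρ^2)/Z))*S := by ring
          rw [hid]; linarith
        have h9 : ρ*y - 2*(1-ρ^2)/Z ≤ y - δ := by
          have hs9 := swStep M y Z hM0 hM4 (by rw [hZdef, hρdef, hqdef]) hZ0
          rw [hδdef, hρdef, hqdef]
          exact hs9
        have h10 : (ρ*y - 2*(1-ρ^2)/Z) * S ≤ (y - δ) * S :=
          mul_le_mul_of_nonneg_right h9 hS0.le
        have h11 : h (s (k+1)) ≤ (y - δ) * S := le_trans h8 h10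
        have heq : (q - (↑(k+1):ℝ)*δ) = y - δ := by rw [hydef]; push_cast; ring
        calc h (s (k+1)) ≤ (y - δ) * S := h11
          _ = (q - (↑(k+1):ℝ)*δ) * S := by rw [heq]
  have hfin := main N le_rfl
  have hsN : s N = t := by rw [hsdef]; simp
  have hNN : ρ^(N-N) = 1 := by simp
  rw [hsN, hNN, one_mul] at hfin
  have hgt := hgpos t (right_mem_Icc.2 ht0.le)
  have hgbt := hgb t (right_mem_Icc.2 ht0.le)
  have hcle : swC M * Real.sqrt t ≤ q * Real.sqrt t :=
    mul_le_mul_of_nonneg_right hcq hst.le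
  nlinarith

/-- **Uniform swallowing of an interval for perturbations of subcritical Hölder drivers
(Corollary 5.2).** For every `M ∈ (0,4)` there is `c > 0` such that: if `V` is
`M`-Hölder-`1/2` on `[0,T]` with `V 0 = 0`, `t ∈ (0,T]`, `W` is continuous with `W 0 = 0`
and `sup_{[0,t]} |W - V| ≤ c √t`, and `0 < |x| ≤ c √t`, then the reverse Loewner flow with
driver `W` started at `x` cannot survive on all of `[0,t]`, i.e. `T^W(x) ≤ t`. -/
theorem stmt9 :
    ∀ M : ℝ, 0 < M → M < 4 → ∃ c > (0 : ℝ),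
      ∀ T : ℝ, 0 < T → ∀ V : ℝ → ℝ, V 0 = 0 →
        (∀ r ∈ Set.Icc (0 : ℝ) T, ∀ s ∈ Set.Icc (0 : ℝ) T,
          |V s - V r| ≤ M * Real.sqrt |s - r|) →
        ∀ t ∈ Set.Ioc (0 : ℝ) T, ∀ W : ℝ → ℝ, ContinuousOn W (Set.Icc 0 T) → W 0 = 0 →
          (∀ s ∈ Set.Icc (0 : ℝ) t, |W s - V s| ≤ c * Real.sqrt t) →
          ∀ x : ℝ, x ≠ 0 → |x| ≤ c * Real.sqrt t →
            ¬ ∃ h : ℝ → ℝ, h 0 = x ∧ ∀ s ∈ Set.Icc (0 : ℝ) t, h s - W s ≠ 0 ∧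
              HasDerivWithinAt h (-2 / (h s - W s)) (Set.Icc 0 t) s := by
  intro M hM0 hM4
  refine ⟨swC M, ?_, ?_⟩
  · exact mul_pos (by unfold swCp; linarith) (pow_pos (by unfold swRho; linarith) _)
  rintro T hT V hV0 hVH t ht W hWc hW0 hWV x hx0 hxle ⟨h, hh0, hode⟩
  rcases hx0.lt_or_gt with hneg | hpos
  · refine sw_aux M hM0 hM4 T hT (fun s => -V s) (by simp [hV0]) ?_ t ht
      (fun s => -W s) hWc.neg (by simp [hW0]) ?_ (-x) (by linarith)
      (by rwa [abs_of_neg hneg] at hxle) (fun s => -(h s)) (by simp [hh0]) ?_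
    · intro r hr u hu
      rw [show -V u - -V r = -(V u - V r) by ring, abs_neg]
      exact hVH r hr u hu
    · intro u hu
      rw [show -W u - -V u = -(W u - V u) by ring, abs_neg]
      exact hWV u hu
    · intro u hu
      obtain ⟨hne, hd⟩ := hode u hu
      constructor
      · rw [show -h u - -W u = -(h u - W u) by ring]
        exact neg_ne_zero.2 hne
      · have hd' := hd.neg
        show HasDerivWithinAt (fun s => -(h s)) (-2 / (-h u - -W u)) (Set.Icc 0 t) u
        rw [show -h u - -W u = -(h u - W u) by ring, div_neg]
        exact hd'
  · exact sw_aux M hM0 hM4 T hT V hV0 hVH t ht W hWc hW0 hWV x hpos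
      (by rwa [abs_of_pos hpos] at hxle) h hh0 hode
end
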